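/- arXiv:2208.07065 — 4 statements merged into one kernel-verified Lean document; each statement's English description precedes it below -/
import Mathlib

section
/- In the formal power series ring over the integers, ∑_{n≥0} d_{25k+1}(n) q^n ≡ (∑_{n≥0} d_1(n) q^n) · ∏_{m≥1}(1-q^{10m})^{5k}/(1-q^{5m})^{15k} (mod 5), for every nonnegative integer k. -/
open Finset PowerSeries

/-- `IsElongated k d` says that `d` is the `k`-elongated plane partition function, i.e.
`∑_{n≥0} d(n) q^n = ∏_{m≥1} (1-q^{2m})^k / (1-q^m)^{3k+1}` in `ℤ[[q]]`, expressed in cleared,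
truncated form (truncating the products at `m = n+1` does not affect the `n`-th coefficient,
and this condition determines `d` uniquely). -/
def IsElongated (k : ℕ) (d : ℕ → ℤ) : Prop :=
  ∀ n : ℕ,
    (PowerSeries.coeff (R := ℤ) n)
        (PowerSeries.mk d *
          ∏ m ∈ Finset.range (n + 1), (1 - (PowerSeries.X : PowerSeries ℤ) ^ (m + 1)) ^ (3 * k + 1)) =
    (PowerSeries.coeff (R := ℤ) n)
        (∏ m ∈ Finset.range (n + 1), (1 - (PowerSeries.X : PowerSeries ℤ) ^ (2 * (m + 1))) ^ k)

section Aux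

variable {R : Type*} [CommRing R]

private lemma aux_coeff_eq_of_dvd {j : ℕ} {f g : PowerSeries R}
    (h : (X : PowerSeries R) ^ (j + 1) ∣ f - g) :
    (coeff (R := R) j) f = (coeff (R := R) j) g := by
  have h0 : (coeff (R := R) j) (f - g) = 0 := X_pow_dvd_iff.mp h j (lt_add_one j)
  rw [map_sub, sub_eq_zero] at h0
  exact h0

private lemma aux_dvd_prod_sub_one {c : ℕ} (s : Finset ℕ) (g : ℕ → PowerSeries R)
    (h : ∀ m ∈ s, (X : PowerSeries R) ^ c ∣ g m - 1) :
    (X : PowerSeries R) ^ c ∣ (∏ m ∈ s, g m) - 1 := by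
  classical
  induction s using Finset.induction with
  | empty => simp
  | insert a s hx ih =>
    rw [Finset.prod_insert hx]
    have h1 := h a (Finset.mem_insert_self a s)
    have h2 := ih (fun m hm => h m (Finset.mem_insert_of_mem hm))
    have key : g a * (∏ m ∈ s, g m) - 1
        = g a * ((∏ m ∈ s, g m) - 1) + (g a - 1) := by ring
    rw [key]
    exact dvd_add (h2.mul_left _) h1

private lemma aux_pow_sub_one {c e : ℕ} {u : PowerSeries R}
    (h : (X : PowerSeries R) ^ c ∣ u - 1) :
    (X : PowerSeries R) ^ c ∣ u ^ e - 1 := by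
  have h2 := sub_dvd_pow_sub_pow u 1 e
  rw [one_pow] at h2
  exact h.trans h2

/-- Stability: truncating the product at `j+1` instead of `n+1` doesn't change coeff `j`. -/
private lemma aux_trunc {j n : ℕ} (hjn : j ≤ n) (f : PowerSeries R) (g : ℕ → PowerSeries R)
    (hg : ∀ m, (X : PowerSeries R) ^ (m + 1) ∣ g m - 1) :
    (coeff (R := R) j) (f * ∏ m ∈ Finset.range (n + 1), g m)
      = (coeff (R := R) j) (f * ∏ m ∈ Finset.range (j + 1), g m) := by
  have hsplit : (∏ m ∈ Finset.range (j + 1), g m) * (∏ m ∈ Finset.Ico (j + 1) (n + 1), g m)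
      = ∏ m ∈ Finset.range (n + 1), g m :=
    Finset.prod_range_mul_prod_Ico g (by omega)
  have hQ : (X : PowerSeries R) ^ (j + 1) ∣ (∏ m ∈ Finset.Ico (j + 1) (n + 1), g m) - 1 := by
    refine aux_dvd_prod_sub_one _ _ (fun m hm => ?_)
    have hm' : j + 1 ≤ m := (Finset.mem_Ico.mp hm).1
    exact (pow_dvd_pow (X : PowerSeries R) (by omega)).trans (hg m)
  apply aux_coeff_eq_of_dvd
  have key : f * (∏ m ∈ Finset.range (n + 1), g m) - f * (∏ m ∈ Finset.range (j + 1), g m)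
      = f * (∏ m ∈ Finset.range (j + 1), g m) *
          ((∏ m ∈ Finset.Ico (j + 1) (n + 1), g m) - 1) := by
    rw [← hsplit]; ring
  rw [key]
  exact hQ.mul_left _

private lemma aux_one_sub_X_pow {c : ℕ} (a b : ℕ) (hab : a ∣ b) (hb : 0 < b) :
    (X : PowerSeries R) ^ a ∣ (1 - (X : PowerSeries R) ^ b) ^ c - 1 := by
  refine aux_pow_sub_one ?_
  have hone : (1 : PowerSeries R) - X ^ b - 1 = -(X ^ b) := by ring
  rw [hone]
  exact (pow_dvd_pow (X : PowerSeries R) (Nat.le_of_dvd hb hab)).neg_right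

end Aux

private instance : CharP (PowerSeries (ZMod 5)) 5 :=
  charP_of_injective_ringHom (PowerSeries.C_injective (R := ZMod 5)) 5

private lemma freshman (j : ℕ) :
    (1 - (X : PowerSeries (ZMod 5)) ^ j) ^ 5 = 1 - (X : PowerSeries (ZMod 5)) ^ (5 * j) := by
  haveI : Fact (Nat.Prime 5) := ⟨by norm_num⟩
  have h : (1 : PowerSeries (ZMod 5)) - X ^ j = 1 + (-(X ^ j)) := by ring
  rw [h, add_pow_char (p := 5), one_pow]
  have h2 : (-(X : PowerSeries (ZMod 5)) ^ j) ^ 5 = -(X ^ (5 * j)) := by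
    rw [neg_pow, mul_comm 5 j, pow_mul]; ring
  rw [h2]; ring

private def φ : ℤ →+* ZMod 5 := Int.castRingHom (ZMod 5)

/-- Transfer an `IsElongated` hypothesis to a mod-`X^{n+1}` congruence over `ZMod 5`. -/
private lemma elongated_congr {K : ℕ} {d : ℕ → ℤ} (hd : IsElongated K d) (n : ℕ) :
    (X : PowerSeries (ZMod 5)) ^ (n + 1) ∣
      (PowerSeries.mk (fun i => (d i : ZMod 5))) *
        (∏ m ∈ Finset.range (n + 1), (1 - (X : PowerSeries (ZMod 5)) ^ (m + 1))) ^ (3 * K + 1)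
      - (∏ m ∈ Finset.range (n + 1), (1 - (X : PowerSeries (ZMod 5)) ^ (2 * (m + 1)))) ^ K := by
  rw [X_pow_dvd_iff]
  intro j hj
  have hjn : j ≤ n := by omega
  rw [map_sub, sub_eq_zero, ← Finset.prod_pow, ← Finset.prod_pow]
  have hmap : PowerSeries.map φ (PowerSeries.mk d)
      = PowerSeries.mk (fun i => (d i : ZMod 5)) := by
    ext i; simp [φ, PowerSeries.coeff_map]
  have hA : ∀ m : ℕ, (X : PowerSeries (ZMod 5)) ^ (m + 1) ∣
      (1 - (X : PowerSeries (ZMod 5)) ^ (m + 1)) ^ (3 * K + 1) - 1 :=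
    fun m => aux_one_sub_X_pow _ _ dvd_rfl (by omega)
  have hB : ∀ m : ℕ, (X : PowerSeries (ZMod 5)) ^ (m + 1) ∣
      (1 - (X : PowerSeries (ZMod 5)) ^ (2 * (m + 1))) ^ K - 1 :=
    fun m => aux_one_sub_X_pow _ _ ⟨2, by ring⟩ (by omega)
  rw [aux_trunc hjn _ _ hA]
  have hRB := aux_trunc (R := ZMod 5) hjn 1 _ hB
  rw [one_mul, one_mul] at hRB
  rw [hRB]
  have hcast : ∀ (s : Finset ℕ) (c e : ℕ), PowerSeries.map φ
        (∏ m ∈ s, (1 - (X : PowerSeries ℤ) ^ (c * (m + 1))) ^ e)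
      = ∏ m ∈ s, (1 - (X : PowerSeries (ZMod 5)) ^ (c * (m + 1))) ^ e := by
    intro s c e
    rw [map_prod]
    refine Finset.prod_congr rfl (fun m _ => ?_)
    rw [map_pow, map_sub, map_one, map_pow, PowerSeries.map_X]
  have hL : (PowerSeries.mk (fun i => (d i : ZMod 5))) *
        ∏ m ∈ Finset.range (j + 1), (1 - (X : PowerSeries (ZMod 5)) ^ (m + 1)) ^ (3 * K + 1)
      = PowerSeries.map φ (PowerSeries.mk d *
        ∏ m ∈ Finset.range (j + 1), (1 - (X : PowerSeries ℤ) ^ (m + 1)) ^ (3 * K + 1)) := by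
    rw [map_mul, hmap]
    congr 1
    have := hcast (Finset.range (j + 1)) 1 (3 * K + 1)
    simpa using this.symm

  rw [hL, ← hcast (Finset.range (j + 1)) 2 K, PowerSeries.coeff_map, PowerSeries.coeff_map,
    hd j]

/-- `∑ d_{25k+1}(n) q^n ≡ (∑ d_1(n) q^n) · ∏_{m≥1} (1-q^{10m})^{5k}/(1-q^{5m})^{15k} (mod 5)`,
in cleared, truncated form: for each `n`, the `n`-th coefficients of
`(∑ d_{25k+1}(n) q^n) · ∏ (1-q^{5m})^{15k}` and `(∑ d_1(n) q^n) · ∏ (1-q^{10m})^{5k}`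
agree modulo 5. -/
theorem d25kp1_genfun_cong (k : ℕ) (d e : ℕ → ℤ)
    (hd : IsElongated (25 * k + 1) d) (he : IsElongated 1 e) (n : ℕ) :
    (5 : ℤ) ∣
      (PowerSeries.coeff (R := ℤ) n)
          (PowerSeries.mk d *
            ∏ m ∈ Finset.range (n + 1),
              (1 - (PowerSeries.X : PowerSeries ℤ) ^ (5 * (m + 1))) ^ (15 * k)) -
      (PowerSeries.coeff (R := ℤ) n)
          (PowerSeries.mk e *
            ∏ m ∈ Finset.range (n + 1),
              (1 - (PowerSeries.X : PowerSeries ℤ) ^ (10 * (m + 1))) ^ (5 * k)) := by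
  set d' : ℕ → ZMod 5 := fun i => (d i : ZMod 5) with hd'
  set e' : ℕ → ZMod 5 := fun i => (e i : ZMod 5) with he'
  set A : PowerSeries (ZMod 5) :=
    ∏ m ∈ Finset.range (n + 1), (1 - (X : PowerSeries (ZMod 5)) ^ (m + 1)) with hA
  set B : PowerSeries (ZMod 5) :=
    ∏ m ∈ Finset.range (n + 1), (1 - (X : PowerSeries (ZMod 5)) ^ (2 * (m + 1))) with hB
  -- Mod-5 congruences from the hypotheses
  have h1 : (X : PowerSeries (ZMod 5)) ^ (n + 1) ∣
      PowerSeries.mk d' * A ^ (75 * k + 4) - B ^ (25 * k + 1) := by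
    have := elongated_congr hd n
    have harith : 3 * (25 * k + 1) + 1 = 75 * k + 4 := by ring
    rwa [harith] at this
  have h2 : (X : PowerSeries (ZMod 5)) ^ (n + 1) ∣
      PowerSeries.mk e' * A ^ 4 - B ^ 1 := by
    have := elongated_congr he n
    norm_num at this ⊢
    exact this
  rw [pow_one] at h2
  -- The key divisibility
  have hkey : (X : PowerSeries (ZMod 5)) ^ (n + 1) ∣
      (PowerSeries.mk d' * A ^ (75 * k) - PowerSeries.mk e' * B ^ (25 * k)) * A ^ 4 := by
    have hid : (PowerSeries.mk d' * A ^ (75 * k) - PowerSeries.mk e' * B ^ (25 * k)) * A ^ 4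
        = (PowerSeries.mk d' * A ^ (75 * k + 4) - B ^ (25 * k + 1))
          - B ^ (25 * k) * (PowerSeries.mk e' * A ^ 4 - B) := by
      rw [pow_add, pow_succ]; ring
    rw [hid]
    exact dvd_sub h1 (h2.mul_left _)
  -- A^4 is a unit
  have hAu : IsUnit (A ^ 4) := by
    refine IsUnit.pow 4 ?_
    rw [PowerSeries.isUnit_iff_constantCoeff]
    have : PowerSeries.constantCoeff (R := ZMod 5) A = 1 := by
      rw [hA, map_prod]
      refine Finset.prod_eq_one (fun m _ => ?_)
      simp
    rw [this]; exact isUnit_one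
  have hdvd : (X : PowerSeries (ZMod 5)) ^ (n + 1) ∣
      PowerSeries.mk d' * A ^ (75 * k) - PowerSeries.mk e' * B ^ (25 * k) := by
    obtain ⟨u, hu⟩ := hAu
    rw [← hu] at hkey
    exact Units.dvd_mul_right.mp hkey
  have hcoeff : (coeff (R := ZMod 5) n) (PowerSeries.mk d' * A ^ (75 * k))
      = (coeff (R := ZMod 5) n) (PowerSeries.mk e' * B ^ (25 * k)) := by
    refine aux_coeff_eq_of_dvd (j := n) ?_
    exact hdvd
  -- Relate to the integer coefficients via the freshman's dream
  have hmapd : PowerSeries.map φ (PowerSeries.mk d) = PowerSeries.mk d' := by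
    ext i; simp [hd', φ, PowerSeries.coeff_map]
  have hmape : PowerSeries.map φ (PowerSeries.mk e) = PowerSeries.mk e' := by
    ext i; simp [he', φ, PowerSeries.coeff_map]
  have hmapL : PowerSeries.map φ (PowerSeries.mk d *
        ∏ m ∈ Finset.range (n + 1), (1 - (X : PowerSeries ℤ) ^ (5 * (m + 1))) ^ (15 * k))
      = PowerSeries.mk d' * A ^ (75 * k) := by
    rw [map_mul, hmapd, map_prod]
    congr 1
    rw [hA, ← Finset.prod_pow]
    refine Finset.prod_congr rfl (fun m _ => ?_)
    rw [map_pow, map_sub, map_one, map_pow, PowerSeries.map_X, ← freshman (m + 1),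
      ← pow_mul]
    ring_nf
  have hmapR : PowerSeries.map φ (PowerSeries.mk e *
        ∏ m ∈ Finset.range (n + 1), (1 - (X : PowerSeries ℤ) ^ (10 * (m + 1))) ^ (5 * k))
      = PowerSeries.mk e' * B ^ (25 * k) := by
    rw [map_mul, hmape, map_prod]
    congr 1
    rw [hB, ← Finset.prod_pow]
    refine Finset.prod_congr rfl (fun m _ => ?_)
    have h10 : 10 * (m + 1) = 5 * (2 * (m + 1)) := by ring
    rw [map_pow, map_sub, map_one, map_pow, PowerSeries.map_X, h10, ← freshman (2 * (m + 1)),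
      ← pow_mul]
    ring_nf
  -- Finish: cast to ZMod 5
  rw [show (5 : ℤ) = ((5 : ℕ) : ℤ) by norm_num, ← ZMod.intCast_zmod_eq_zero_iff_dvd]
  push_cast
  rw [sub_eq_zero]
  have hL : ((PowerSeries.coeff (R := ℤ) n) (PowerSeries.mk d *
        ∏ m ∈ Finset.range (n + 1), (1 - (X : PowerSeries ℤ) ^ (5 * (m + 1))) ^ (15 * k)) :
        ZMod 5)
      = (coeff (R := ZMod 5) n) (PowerSeries.mk d' * A ^ (75 * k)) := by
    rw [← hmapL, PowerSeries.coeff_map]; rfl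
  have hR : ((PowerSeries.coeff (R := ℤ) n) (PowerSeries.mk e *
        ∏ m ∈ Finset.range (n + 1), (1 - (X : PowerSeries ℤ) ^ (10 * (m + 1))) ^ (5 * k)) :
        ZMod 5)
      = (coeff (R := ZMod 5) n) (PowerSeries.mk e' * B ^ (25 * k)) := by
    rw [← hmapR, PowerSeries.coeff_map]; rfl
  rw [hL, hR, hcoeff]
end

section
/- Jacobi's identity: ∏_{m≥1} (1-q^m)^3 = ∑_{n≥0} (-1)^n (2n+1) q^{n(n+1)/2} as formal power series. -/
open Finset PowerSeries

namespace JacobiAux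

noncomputable section

abbrev R : Type := PowerSeries ℤ

def q : R := PowerSeries.X

def qb : ℕ → ℕ → R
  | 0, 0 => 1
  | 0, _+1 => 0
  | _+1, 0 => 1
  | n+1, k+1 => qb n (k+1) + q^(n-k) * qb n k
@[simp] lemma qb_zero_right (n : ℕ) : qb n 0 = 1 := by cases n <;> rfl
lemma qb_eq_zero {n k : ℕ} (h : n < k) : qb n k = 0 := by
  induction n generalizing k with
  | zero => obtain ⟨k, rfl⟩ := Nat.exists_eq_add_of_lt h; rfl
  | succ n ih =>
      obtain ⟨j, rfl⟩ : ∃ j, k = j + 1 := ⟨k - 1, by omega⟩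
      show qb n (j+1) + q^(n-j) * qb n j = 0
      rw [ih (by omega), ih (by omega), mul_zero, add_zero]
@[simp] lemma qb_self (n : ℕ) : qb n n = 1 := by
  induction n with
  | zero => rfl
  | succ n ih =>
      show qb n (n+1) + q^(n-n) * qb n n = 1
      rw [qb_eq_zero (by omega), ih]; simp
lemma pascalA (n m : ℕ) (hm : 1 ≤ m) :
    qb (n+1) m = qb n m + q^(n+1-m) * qb n (m-1) := by
  obtain ⟨k, rfl⟩ : ∃ k, m = k + 1 := ⟨m - 1, by omega⟩
  show qb n (k+1) + q^(n-k) * qb n k = _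
  rw [Nat.succ_sub_succ, Nat.add_sub_cancel]

lemma pascalB (n : ℕ) : ∀ m, 1 ≤ m → qb (n+1) m = q^m * qb n m + qb n (m-1) := by
  induction n with
  | zero =>
      intro m hm
      rcases eq_or_lt_of_le hm with h | h
      · rw [← h]; simp [show qb 1 1 = 1 from qb_self 1, show qb 0 1 = 0 from rfl]
      · rw [qb_eq_zero h, qb_eq_zero (show 0 < m by omega),
          qb_eq_zero (show (0:ℕ) < m - 1 by omega)]
        ring
  | succ n ih =>
      intro m hm
      rcases lt_or_ge (n+2) m with h | h
      · rw [qb_eq_zero (show n+2 < m by omega), qb_eq_zero (show n+1 < m by omega),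
          qb_eq_zero (show n+1 < m - 1 by omega)]
        ring
      rcases eq_or_lt_of_le h with h2 | h2
      · subst h2
        rw [qb_self, qb_eq_zero (show n+1 < n+2 by omega), show n+2-1 = n+1 by omega, qb_self]
        ring
      -- now 1 ≤ m ≤ n+1
      have hm1 : m ≤ n + 1 := by omega
      obtain ⟨t, rfl⟩ : ∃ t, m = t + 1 := ⟨m - 1, by omega⟩
      obtain ⟨s, hs⟩ : ∃ s, n + 1 = (t+1) + s := ⟨n - t, by omega⟩
      have h1 := pascalA n (t+1) (by omega)
      have h2' := ih (t+1) (by omega)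
      have goal1 := pascalA (n+1) (t+1) (by omega)
      rw [show n+1-(t+1) = s by omega] at h1
      rw [show n+1+1-(t+1) = s+1 by omega] at goal1
      simp only [Nat.add_sub_cancel] at h1 h2' goal1 ⊢
      rw [goal1]
      rcases Nat.eq_zero_or_pos t with rfl | ht
      · -- m = 1 case
        simp only [qb_zero_right] at *
        linear_combination h2' - q * h1
      · obtain ⟨r, rfl⟩ : ∃ r, t = r + 1 := ⟨t - 1, by omega⟩
        have h3 := pascalA n (r+1) (by omega)
        have h4 := ih (r+1) (by omega)
        rw [show n+1-(r+1) = s+1 by omega] at h3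
        simp only [Nat.add_sub_cancel] at h3 h4
        have rel1 : (1 - q^(r+1+1)) * qb n (r+1+1) = (1 - q^s) * qb n (r+1) := by
          linear_combination h2' - h1
        have rel2 : (1 - q^(r+1)) * qb n (r+1) = (1 - q^(s+1)) * qb n r := by
          linear_combination h4 - h3
        have e1 : (1 - q^(r+1+1)) * qb (n+1) (r+1+1) = (1 - q^(r+1+1) * q^s) * qb n (r+1) := by
          linear_combination (1 - q^(r+1+1)) * h2' + q^(r+1+1) * rel1
        have e2 : (1 - q^(s+1)) * qb (n+1) (r+1) = (1 - q^(s+1) * q^(r+1)) * qb n (r+1) := by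
          linear_combination (1 - q^(s+1)) * h4 - rel2
        linear_combination e1 - e2

def P (n : ℕ) : R := ∏ j ∈ range n, (1 - q ^ (j+1))

lemma P_succ (n : ℕ) : P (n+1) = P n * (1 - q^(n+1)) := Finset.prod_range_succ _ _

lemma qbP (Nn : ℕ) : ∀ m, m ≤ Nn → qb Nn m * P (Nn - m) = ∏ j ∈ range (Nn - m), (1 - q^(m+1+j)) := by
  induction Nn with
  | zero =>
      intro m hm
      interval_cases m
      simp [P]
  | succ Nn ih =>
      intro m hm
      rcases Nat.eq_zero_or_pos m with rfl | hm1
      · simp only [qb_zero_right, one_mul, Nat.sub_zero, P]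
        exact Finset.prod_congr rfl fun j _ => by rw [show 0+1+j = j+1 by omega]
      rcases eq_or_lt_of_le hm with rfl | hlt
      · simp [qb_self, Nat.sub_self, P]
      -- 1 ≤ m ≤ Nn
      have hmn : m ≤ Nn := by omega
      have key := pascalB Nn m hm1
      have hGm := ih m hmn
      have hGm' := ih (m-1) (by omega)
      rw [show Nn - (m-1) = (Nn - m) + 1 by omega] at hGm'
      have splitm' : ∏ j ∈ range ((Nn - m) + 1), (1 - q^((m-1)+1+j))
          = (1 - q^m) * ∏ j ∈ range (Nn - m), (1 - q^(m+1+j)) := by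
        rw [Finset.prod_range_succ', show (m-1)+1+0 = m by omega, mul_comm]
        congr 1
        apply Finset.prod_congr rfl
        intro j _
        congr 2
        omega
      rw [splitm', P_succ] at hGm'
      rw [show Nn + 1 - m = (Nn - m) + 1 by omega, P_succ, Finset.prod_range_succ, key]
      rw [show m+1+(Nn-m) = Nn+1 by omega]
      have hp : q^m * q^((Nn-m)+1) = q^(Nn+1) := by rw [← pow_add]; congr 1; omega
      linear_combination q^m * (1 - q^((Nn-m)+1)) * hGm + hGm'
        - (∏ j ∈ range (Nn - m), (1 - q^(m+1+j))) * hp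

lemma high (a r : ℕ) : ∃ z : R, ∏ j ∈ range r, (1 - q^(a+1+j)) = 1 + q^(a+1) * z := by
  induction r with
  | zero => exact ⟨0, by simp⟩
  | succ r ih =>
      obtain ⟨z, hz⟩ := ih
      refine ⟨z - q^r - z * q^(a+1+r), ?_⟩
      rw [Finset.prod_range_succ, hz]
      ring

lemma star (n m : ℕ) (h2 : 2 ≤ m) (hm : m ≤ 2*n+2) :
    qb (2*n+2) m = (1 + q^(2*n+1)) * qb (2*n) (m-1) + q^m * qb (2*n) m
      + q^(2*n+2-m) * qb (2*n) (m-2) := by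
  have hA := pascalA (2*n+1) m (by omega)
  have hB := pascalB (2*n) m (by omega)
  have hB' := pascalB (2*n) (m-1) (by omega)
  rw [show m-1-1 = m-2 by omega] at hB'
  have hp : q^(2*n+2-m) * q^(m-1) = q^(2*n+1) := by rw [← pow_add]; congr 1; omega
  rw [show 2*n+1+1 = 2*n+2 by omega] at hA
  linear_combination hA + hB + q^(2*n+2-m) * hB' + qb (2*n) (m-1) * hp

def T : ℕ → ℕ
  | 0 => 0
  | k+1 => T k + (k+1)

def e (n m : ℕ) : ℕ := if n ≤ m then T (m - n) else T (n - m - 1)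

def cc (n m : ℕ) : R := qb (2*n) m * q ^ (e n m)

lemma T_succ (k : ℕ) : T (k+1) = T k + (k+1) := rfl

lemma two_T (k : ℕ) : 2 * T k = k * (k+1) := by
  induction k with
  | zero => rfl
  | succ k ih => rw [T_succ]; ring_nf; ring_nf at ih; omega

lemma T_eq (k : ℕ) : T k = k * (k+1) / 2 := by have := two_T k; omega

lemma E1 (n m : ℕ) (hm : 1 ≤ m) : e (n+1) m = e n (m-1) := by
  unfold e
  rcases le_or_gt (n+1) m with h | h
  · rw [if_pos h, if_pos (by omega)]
    congr 1; omega
  · rw [if_neg (by omega), if_neg (by omega)]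
    congr 1; omega

lemma E2 (n m : ℕ) (hm : 1 ≤ m) : e n (m-1) + m = e n m + n := by
  unfold e
  rcases le_or_gt (n+1) m with h | h
  · rw [if_pos (show n ≤ m - 1 by omega), if_pos (show n ≤ m by omega),
      show m - n = (m-1-n)+1 by omega, T_succ]
    omega
  · rcases eq_or_lt_of_le (show m ≤ n by omega) with heq | hlt
    · rw [if_neg (show ¬ n ≤ m - 1 by omega), if_pos (show n ≤ m by omega),
        show n - (m-1) - 1 = 0 by omega, show m - n = 0 by omega]
      omega
    · rw [if_neg (show ¬ n ≤ m - 1 by omega), if_neg (show ¬ n ≤ m by omega),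
        show n - (m-1) - 1 = (n-m-1)+1 by omega, T_succ]
      omega

lemma E3 (n m : ℕ) (h2 : 2 ≤ m) (hm : m ≤ 2*n+2) :
    e n (m-1) + (2*n+2-m) = e n (m-2) + (n+1) := by
  unfold e
  rcases le_or_gt (n+2) m with h | h
  · rw [if_pos (show n ≤ m - 1 by omega), if_pos (show n ≤ m - 2 by omega),
      show m - 1 - n = (m-2-n)+1 by omega, T_succ]
    omega
  · rcases eq_or_lt_of_le (show m ≤ n + 1 by omega) with heq | hlt
    · rw [if_pos (show n ≤ m - 1 by omega), if_neg (show ¬ n ≤ m - 2 by omega),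
        show m - 1 - n = 0 by omega, show n - (m-2) - 1 = 0 by omega]
      omega
    · rw [if_neg (show ¬ n ≤ m - 1 by omega), if_neg (show ¬ n ≤ m - 2 by omega),
        show n - (m-2) - 1 = (n-(m-1)-1)+1 by omega, T_succ]
      omega

lemma en0 (n : ℕ) : e (n+1) 0 = n + e n 0 := by
  rcases Nat.eq_zero_or_pos n with rfl | hn
  · rfl
  · unfold e
    rw [if_neg (by omega), if_neg (by omega),
      show n + 1 - 0 - 1 = (n-0-1)+1 by omega, T_succ]
    omega

lemma key0 (n : ℕ) : cc (n+1) 0 = q^n * cc n 0 := by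
  unfold cc
  simp only [qb_zero_right, one_mul, en0, pow_add]

lemma qbN1 (N : ℕ) : qb (N+1) 1 = qb N 1 + q^N := by
  show qb N 1 + q^(N-0) * qb N 0 = _
  simp

lemma qbgeo (N : ℕ) : q * qb N 1 + 1 = qb N 1 + q^N := by
  induction N with
  | zero => simp [show qb 0 1 = 0 from rfl]
  | succ N ih => rw [qbN1]; linear_combination ih

lemma en11 (n : ℕ) (hn : 1 ≤ n) : e (n+1) 1 = e n 0 := by
  unfold e
  rw [if_neg (by omega), if_neg (by omega)]
  congr 1 <;> omega

lemma en1 (n : ℕ) (hn : 1 ≤ n) : n + e n 1 = 1 + e n 0 := by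
  rcases eq_or_lt_of_le hn with heq | hlt
  · subst heq
    rfl
  · unfold e
    rw [if_neg (by omega), if_neg (by omega),
      show n - 0 - 1 = (n-1-1)+1 by omega, T_succ]
    omega

lemma key1 (n : ℕ) : cc (n+1) 1 = q^n * cc n 1 + (1 + q^(2*n+1)) * cc n 0 := by
  rcases Nat.eq_zero_or_pos n with rfl | hn
  · show qb 2 1 * q ^ (e 1 1) = q^0 * (qb 0 1 * q ^ (e 0 1)) + (1 + q^1) * (qb 0 0 * q ^ (e 0 0))
    norm_num [show qb 2 1 = 1 + q by show qb 1 1 + q^(1-0) * qb 1 0 = _; norm_num [show qb 1 1 = (1:R) from qb_self 1],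
      show qb 0 1 = 0 from rfl, show qb 0 0 = 1 from rfl, show e 1 1 = 0 from rfl, show e 0 0 = 0 from rfl]
  · unfold cc
    rw [show 2*(n+1) = (2*n+1)+1 by ring, qbN1 (2*n+1), qbN1 (2*n), en11 n hn]
    simp only [qb_zero_right, one_mul]
    have hg := qbgeo (2*n)
    have hq : q^n * q^(e n 1) = q^1 * q^(e n 0) := by
      rw [← pow_add, ← pow_add]
      congr 1
      have := en1 n hn
      omega
    have hq2 : q^(2*n+1) = q * q^(2*n) := by ring
    linear_combination (- q^(e n 0)) * hg - qb (2*n) 1 * hq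

lemma key (n m : ℕ) (h2 : 2 ≤ m) :
    cc (n+1) m = q^n * cc n m + (1 + q^(2*n+1)) * cc n (m-1) + q^(n+1) * cc n (m-2) := by
  rcases le_or_gt m (2*n+2) with h | h
  · have h1 := E1 n m (by omega)
    have hE2 := E2 n m (by omega)
    have hE3 := E3 n m h2 h
    unfold cc
    rw [show 2*(n+1) = 2*n+2 by ring, star n m h2 h, h1]
    have pm : q^m * q^(e n (m-1)) = q^n * q^(e n m) := by
      rw [← pow_add, ← pow_add]; congr 1; omega
    have pc : q^(2*n+2-m) * q^(e n (m-1)) = q^(n+1) * q^(e n (m-2)) := by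
      rw [← pow_add, ← pow_add]; congr 1; omega
    linear_combination qb (2*n) m * pm + qb (2*n) (m-2) * pc
  · unfold cc
    rw [qb_eq_zero (show 2*(n+1) < m by omega), qb_eq_zero (show 2*n < m by omega),
      qb_eq_zero (show 2*n < m - 1 by omega), qb_eq_zero (show 2*n < m - 2 by omega)]
    ring

lemma cc_top {n m : ℕ} (h : 2*n < m) : cc n m = 0 := by
  unfold cc
  rw [qb_eq_zero h, zero_mul]

def PC : R →+* Polynomial R := Polynomial.C
def Px : Polynomial R := Polynomial.X

def FF (n : ℕ) : Polynomial R :=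
  (∏ j ∈ range n, (1 + PC (q^(j+1)) * Px)) * (∏ j ∈ range n, (Px + PC (q^j)))

def SS (n : ℕ) : Polynomial R := ∑ m ∈ range (2*n+1), PC (cc n m) * Px ^ m

def u0 (n m : ℕ) : Polynomial R := PC (q^n * cc n m) * Px ^ m
def g (n m : ℕ) : Polynomial R :=
  if m = 0 then 0 else PC ((1 + q^(2*n+1)) * cc n (m-1)) * Px ^ m
def hh (n m : ℕ) : Polynomial R :=
  if m ≤ 1 then 0 else PC (q^(n+1) * cc n (m-2)) * Px ^ m

lemma g_succ (n m : ℕ) : g n (m+1) = PC ((1 + q^(2*n+1)) * cc n m) * Px ^ (m+1) := by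
  simp [g]

lemma hh_succ (n m : ℕ) : hh n (m+2) = PC (q^(n+1) * cc n m) * Px ^ (m+2) := by
  simp [hh]

lemma cauchy (n : ℕ) : FF n = SS n := by
  induction n with
  | zero =>
      show (1 : Polynomial R) * 1 = ∑ m ∈ range 1, PC (cc 0 m) * Px ^ m
      rw [sum_range_one]
      have : cc 0 0 = 1 := by norm_num [cc, e, show qb 0 0 = 1 from rfl, show T 0 = 0 from rfl]
      rw [this]
      simp [PC, Px]
  | succ n ih =>
      have hstep : FF (n+1) = FF n * ((1 + PC (q^(n+1)) * Px) * (Px + PC (q^n))) := by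
        unfold FF
        rw [Finset.prod_range_succ, Finset.prod_range_succ]
        ring
      have cpow : PC (q^(2*n+1)) = PC (q^(n+1)) * PC (q^n) := by
        rw [← map_mul, ← pow_add, show (n+1)+n = 2*n+1 by ring]
      have expand : (1 + PC (q^(n+1)) * Px) * (Px + PC (q^n))
          = PC (q^n) + PC (1 + q^(2*n+1)) * Px + PC (q^(n+1)) * Px^2 := by
        rw [map_add, map_one, cpow]
        ring
      rw [hstep, ih, expand]
      unfold SS
      have hterm : ∀ m ∈ range (2*n+1),
          (PC (cc n m) * Px ^ m) * (PC (q^n) + PC (1 + q^(2*n+1)) * Px + PC (q^(n+1)) * Px^2)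
          = u0 n m + PC ((1 + q^(2*n+1)) * cc n m) * Px ^ (m+1)
            + PC (q^(n+1) * cc n m) * Px ^ (m+2) := by
        intro m _
        unfold u0
        rw [map_mul, map_mul, map_mul]
        ring
      rw [Finset.sum_mul, Finset.sum_congr rfl hterm, Finset.sum_add_distrib,
        Finset.sum_add_distrib]
      have s0 : ∑ m ∈ range (2*(n+1)+1), u0 n m = ∑ m ∈ range (2*n+1), u0 n m := by
        have z1 : u0 n (2*n+1) = 0 := by simp [u0, cc_top (show 2*n < 2*n+1 by omega)]
        have z2 : u0 n (2*n+1+1) = 0 := by simp [u0, cc_top (show 2*n < 2*n+1+1 by omega)]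
        rw [show 2*(n+1)+1 = ((2*n+1)+1)+1 by ring, Finset.sum_range_succ, z2, add_zero,
          Finset.sum_range_succ, z1, add_zero]
      have s1 : ∑ m ∈ range (2*(n+1)+1), g n m
          = ∑ m ∈ range (2*n+1), PC ((1 + q^(2*n+1)) * cc n m) * Px ^ (m+1) := by
        rw [show 2*(n+1)+1 = (2*n+2)+1 by ring, Finset.sum_range_succ',
          Finset.sum_congr rfl (fun i (_ : i ∈ range (2*n+2)) => g_succ n i),
          show (2*n+2 : ℕ) = (2*n+1)+1 by ring, Finset.sum_range_succ,
          cc_top (show 2*n < 2*n+1 by omega)]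
        simp [g]
      have s2 : ∑ m ∈ range (2*(n+1)+1), hh n m
          = ∑ m ∈ range (2*n+1), PC (q^(n+1) * cc n m) * Px ^ (m+2) := by
        rw [show 2*(n+1)+1 = ((2*n+1)+1)+1 by ring, Finset.sum_range_succ',
          Finset.sum_range_succ',
          Finset.sum_congr rfl (fun i (_ : i ∈ range (2*n+1)) =>
            (by rw [show i+1+1 = i+2 by omega, hh_succ] :
              hh n (i+1+1) = PC (q^(n+1) * cc n i) * Px ^ (i+2)))]
        simp [hh]
      rw [← s0, ← s1, ← s2, ← Finset.sum_add_distrib, ← Finset.sum_add_distrib]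
      apply Finset.sum_congr rfl
      intro m _
      match m with
      | 0 =>
          show u0 n 0 + g n 0 + hh n 0 = PC (cc (n+1) 0) * Px ^ 0
          rw [key0, u0]
          norm_num [g, hh, map_mul]
      | 1 =>
          show u0 n 1 + g n 1 + hh n 1 = PC (cc (n+1) 1) * Px ^ 1
          rw [key1, u0]
          norm_num [g, hh, map_add, map_mul]
          ring
      | (k+2) =>
          show u0 n (k+2) + g n (k+2) + hh n (k+2) = PC (cc (n+1) (k+2)) * Px ^ (k+2)
          rw [key n (k+2) (by omega), u0, g_succ, hh_succ]
          rw [show k+2-1 = k+1 by omega, show k+2-2 = k by omega]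
          rw [map_add, map_add, map_mul, map_mul, map_mul]
          ring

lemma P_add (a b : ℕ) : P (a+b) = P a * ∏ j ∈ range b, (1 - q^(a+1+j)) := by
  unfold P
  rw [Finset.prod_range_add]
  congr 1
  apply Finset.prod_congr rfl
  intro j _
  congr 2
  omega

lemma coeff_small (Nc s : ℕ) (hz : Nc < s) (z : R) :
    (PowerSeries.coeff (R := ℤ) Nc) (q^s * z) = 0 := by
  show (PowerSeries.coeff (R := ℤ) Nc) (PowerSeries.X^s * z) = 0
  rw [PowerSeries.coeff_X_pow_mul', if_neg (by omega)]

lemma coeff_qpow (Nc s : ℕ) : (PowerSeries.coeff (R := ℤ) Nc) (q^s) = if s = Nc then 1 else 0 := by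
  show (PowerSeries.coeff (R := ℤ) Nc) (PowerSeries.X^s) = _
  rw [PowerSeries.coeff_X_pow]
  simp [eq_comm]

lemma B_split (n : ℕ) :
    ∏ j ∈ range (n+1), (Px + PC (q^j)) = (Px + 1) * ∏ j ∈ range n, (Px + PC (q^(j+1))) := by
  rw [Finset.prod_range_succ']
  rw [show (PC (q^0) : Polynomial R) = 1 by rw [pow_zero, map_one]]
  ring

lemma evalA (n : ℕ) :
    Polynomial.eval (-1 : R) (∏ j ∈ range n, (1 + PC (q^(j+1)) * Px)) = P n := by
  rw [Polynomial.eval_prod]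
  unfold P
  apply Finset.prod_congr rfl
  intro j _
  simp [PC, Px, sub_eq_add_neg]

lemma evalB1 (n : ℕ) :
    Polynomial.eval (-1 : R) (∏ j ∈ range n, (Px + PC (q^(j+1)))) = (-1)^n * P n := by
  rw [Polynomial.eval_prod]
  have : ∀ j ∈ range n, Polynomial.eval (-1 : R) (Px + PC (q^(j+1)))
      = (-1) * (1 - q^(j+1)) := by
    intro j _
    simp [PC, Px]
    ring
  rw [Finset.prod_congr rfl this, Finset.prod_mul_distrib, Finset.prod_const, card_range]
  rfl

lemma evalFF (n : ℕ) :
    Polynomial.eval (-1 : R) (Polynomial.derivative (FF (n+1)))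
      = P (n+1) * ((-1)^n * P n) := by
  unfold FF
  rw [B_split, show (∏ j ∈ range (n+1), (1 + PC (q^(j+1)) * Px)) *
      ((Px + 1) * ∏ j ∈ range n, (Px + PC (q^(j+1))))
      = (Px + 1) * ((∏ j ∈ range (n+1), (1 + PC (q^(j+1)) * Px)) *
        ∏ j ∈ range n, (Px + PC (q^(j+1)))) by ring]
  rw [Polynomial.derivative_mul, Polynomial.eval_add]
  simp only [Polynomial.eval_mul]
  have hx1 : Polynomial.eval (-1 : R) (Px + 1) = 0 := by simp [Px]
  have hd : Polynomial.eval (-1 : R) (Polynomial.derivative (Px + 1)) = 1 := by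
    simp [Px]
  rw [hx1, hd, evalA, evalB1, one_mul, zero_mul, add_zero]

lemma evalSS (n : ℕ) :
    Polynomial.eval (-1 : R) (Polynomial.derivative (SS n))
      = ∑ m ∈ range (2*n+1), cc n m * (m : R) * (-1)^(m-1) := by
  unfold SS
  rw [map_sum Polynomial.derivative _ (range (2*n+1)), Polynomial.eval_finset_sum]
  apply Finset.sum_congr rfl
  intro m _
  simp only [PC, Px]
  rw [Polynomial.derivative_C_mul, Polynomial.eval_mul, Polynomial.derivative_X_pow,
    Polynomial.eval_mul]
  simp
  ring

lemma J (n' : ℕ) :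
    P (n'+1) * P n' = ∑ m ∈ range (2*(n'+1)+1), (-1 : R)^(m+n'+1) * (m : R) * cc (n'+1) m := by
  have h := congrArg (fun p => Polynomial.eval (-1 : R) (Polynomial.derivative p))
    (cauchy (n'+1))
  simp only [evalFF, evalSS] at h
  have h2 := congrArg (fun z => (-1 : R)^n' * z) h
  simp only [Finset.mul_sum] at h2
  have hsq : ((-1 : R)^n') * ((-1)^n') = 1 := by
    rw [← pow_add, ← two_mul, pow_mul]
    norm_num
  calc P (n'+1) * P n'
      = (-1 : R)^n' * (P (n'+1) * ((-1)^n' * P n')) := by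
        rw [show ((-1 : R)^n') * (P (n'+1) * ((-1)^n' * P n'))
          = (((-1 : R)^n') * ((-1)^n')) * (P (n'+1) * P n') by ring, hsq, one_mul]
    _ = ∑ m ∈ range (2*(n'+1)+1), (-1 : R)^n' * (cc (n'+1) m * (m : R) * (-1)^(m-1)) := h2
    _ = ∑ m ∈ range (2*(n'+1)+1), (-1 : R)^(m+n'+1) * (m : R) * cc (n'+1) m := by
        apply Finset.sum_congr rfl
        intro m _
        match m with
        | 0 => simp
        | (k+1) =>
            rw [Nat.add_sub_cancel, show k+1+n'+1 = (n'+k)+2 by ring, pow_add, pow_add]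
            norm_num
            ring

lemma T_ge (k : ℕ) : k ≤ T k := by
  induction k with
  | zero => simp [T]
  | succ k ih => rw [T_succ]; omega

lemma hEbig (N m : ℕ) : N < e (N+1) m + (m+1) := by
  unfold e
  split
  · omega
  · have := T_ge (N+1-m-1)
    omega

lemma hEbig2 (N m : ℕ) (h : N+1 < m) : N < e (N+1) m + ((2*(N+1)-m)+1) := by
  unfold e
  rw [if_pos (by omega)]
  have := T_ge (m - (N+1))
  omega

lemma coeff_main (N m : ℕ) (hm : m ≤ 2*(N+1)) :
    (PowerSeries.coeff (R := ℤ) N) (cc (N+1) m * P (N+1))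
      = if e (N+1) m = N then 1 else 0 := by
  have hqbP := qbP (2*(N+1)) m (by omega)
  obtain ⟨v, hv⟩ := high m (2*(N+1) - m)
  rw [hv] at hqbP
  rcases le_or_gt m (N+1) with hc | hc
  · obtain ⟨w, hw⟩ := high (N+1) ((N+1) - m)
    have hsplit : P (2*(N+1) - m) = P (N+1) * (1 + q^((N+1)+1) * w) := by
      rw [show 2*(N+1) - m = (N+1) + ((N+1) - m) by omega, P_add, hw]
    rw [hsplit] at hqbP
    have base : cc (N+1) m * P (N+1)
        = (q^(e (N+1) m) + q^(e (N+1) m + (m+1)) * v)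
          - q^(e (N+1) m + ((N+1)+1)) * (w * (qb (2*(N+1)) m * P (N+1))) := by
      unfold cc
      rw [pow_add, pow_add]
      linear_combination q^(e (N+1) m) * hqbP
    rw [base, map_sub, map_add, coeff_qpow, coeff_small N _ (hEbig N m) v,
      coeff_small N _ (by omega) _, add_zero, sub_zero]
  · obtain ⟨w, hw⟩ := high (2*(N+1)-m) (m - (N+1))
    have hsplit : P (N+1) = P (2*(N+1)-m) * (1 + q^((2*(N+1)-m)+1) * w) := by
      conv_lhs => rw [show (N+1) = (2*(N+1)-m) + (m - (N+1)) by omega]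
      rw [P_add, hw]
    have base : cc (N+1) m * P (N+1)
        = q^(e (N+1) m) + (q^(e (N+1) m + (m+1)) * v
          + (q^(e (N+1) m + ((2*(N+1)-m)+1)) * w
          + q^(e (N+1) m + (m+1) + ((2*(N+1)-m)+1)) * (v * w))) := by
      unfold cc
      rw [hsplit]
      simp only [pow_add]
      linear_combination ((1 + q^((2*(N+1)-m)+1) * w) * q^(e (N+1) m)) * hqbP
    rw [base, map_add, map_add, map_add, coeff_qpow, coeff_small N _ (hEbig N m) v,
      coeff_small N _ (hEbig2 N m hc) w, coeff_small N _ (by have := hEbig N m; omega) _]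
    ring

theorem jacobi_final (N : ℕ) :
    (PowerSeries.coeff (R := ℤ) N)
        (∏ m ∈ Finset.range (N + 1), (1 - (PowerSeries.X : PowerSeries ℤ) ^ (m + 1)) ^ 3) =
    ∑ n ∈ Finset.range (N + 1),
      if n * (n + 1) / 2 = N then (-1 : ℤ) ^ n * (2 * n + 1) else 0 := by
  have h1 : (∏ m ∈ range (N+1), (1 - (PowerSeries.X : PowerSeries ℤ)^(m+1))^3)
      = P (N+1) ^ 3 := by
    rw [Finset.prod_pow]
    rfl
  rw [h1]
  have h3 : P (N+1)^3 = P (N+1)^2 * P N - q^(N+1) * (P (N+1)^2 * P N) := by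
    linear_combination (P (N+1))^2 * (P_succ N)
  rw [h3, map_sub, coeff_small N (N+1) (by omega) _, sub_zero]
  have h4 : P (N+1)^2 * P N = ∑ m ∈ range (2*(N+1)+1),
      PowerSeries.C (R := ℤ) ((-1)^(m+N+1) * (m:ℤ)) * (cc (N+1) m * P (N+1)) := by
    have hcast : ∀ m : ℕ, (PowerSeries.C (R := ℤ)) ((-1)^(m+N+1) * (m:ℤ))
        = (-1 : R)^(m+N+1) * (m : R) := by
      intro m
      rw [map_mul, map_pow, map_neg, map_one, map_natCast]
    calc P (N+1)^2 * P N = (P (N+1) * P N) * P (N+1) := by ring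
      _ = (∑ m ∈ range (2*(N+1)+1), (-1 : R)^(m+N+1) * (m : R) * cc (N+1) m) * P (N+1) := by
          rw [J N]
      _ = _ := by
          rw [Finset.sum_mul]
          apply Finset.sum_congr rfl
          intro m _
          rw [hcast m]
          ring
  rw [h4, map_sum]
  have h5 : ∀ m ∈ range (2*(N+1)+1),
      (PowerSeries.coeff (R := ℤ) N) (PowerSeries.C (R := ℤ) ((-1)^(m+N+1) * (m:ℤ)) * (cc (N+1) m * P (N+1)))
      = (-1:ℤ)^(m+N+1) * (m:ℤ) * (if e (N+1) m = N then 1 else 0) := by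
    intro m hm
    rw [PowerSeries.coeff_C_mul, coeff_main N m (by rw [Finset.mem_range] at hm; omega)]
  rw [Finset.sum_congr rfl h5]
  rw [show 2*(N+1)+1 = (N+1) + (N+2) by ring, Finset.sum_range_add]
  have hfirst : ∑ m ∈ range (N+1),
      ((-1:ℤ)^(m+N+1) * (m:ℤ) * (if e (N+1) m = N then 1 else 0))
      = ∑ k ∈ range (N+1), (-1:ℤ)^(k+1) * ((N-k : ℕ):ℤ) * (if T k = N then 1 else 0) := by
    rw [← Finset.sum_range_reflect]
    apply Finset.sum_congr rfl
    intro k hk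
    rw [Finset.mem_range] at hk
    rw [show N+1-1-k = N-k by omega]
    have he : e (N+1) (N-k) = T k := by
      unfold e
      rw [if_neg (by omega)]
      congr 1
      omega
    have hs : (-1:ℤ)^((N-k)+N+1) = (-1)^(k+1) := by
      rw [show (N-k)+N+1 = (k+1) + 2*(N-k) by omega, pow_add, pow_mul]
      norm_num
    rw [he, hs]
  have hsecond : ∑ i ∈ range (N+2),
      ((-1:ℤ)^((N+1+i)+N+1) * ((N+1+i : ℕ):ℤ) * (if e (N+1) (N+1+i) = N then 1 else 0))
      = ∑ k ∈ range (N+1), (-1:ℤ)^k * ((N+1+k : ℕ):ℤ) * (if T k = N then 1 else 0) := by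
    rw [show N+2 = (N+1)+1 from rfl, Finset.sum_range_succ]
    have hz : e (N+1) (N+1+(N+1)) = T (N+1) := by
      unfold e
      rw [if_pos (by omega)]
      congr 1
      omega
    rw [hz, if_neg (by have := T_ge (N+1); omega), mul_zero, add_zero]
    apply Finset.sum_congr rfl
    intro k hk
    have he : e (N+1) (N+1+k) = T k := by
      unfold e
      rw [if_pos (by omega)]
      congr 1
      omega
    have hs : (-1:ℤ)^((N+1+k)+N+1) = (-1)^k := by
      rw [show (N+1+k)+N+1 = k + 2*(N+1) by omega, pow_add, pow_mul]
      norm_num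
    rw [he, hs]
  rw [hfirst, hsecond, ← Finset.sum_add_distrib]
  apply Finset.sum_congr rfl
  intro k hk
  rw [Finset.mem_range] at hk
  rw [← T_eq k]
  split_ifs with h
  · rw [pow_succ]
    have : ((N-k : ℕ):ℤ) = (N:ℤ) - (k:ℤ) := by
      rw [Nat.cast_sub (by omega)]
    rw [this]
    push_cast
    ring
  · ring

end

end JacobiAux

/-- Jacobi's identity `∏_{m≥1} (1-q^m)^3 = ∑_{n≥0} (-1)^n (2n+1) q^{n(n+1)/2}` in `ℤ[[q]]`,
stated coefficientwise with the product truncated at `m = N+1` (this does not affect the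
`N`-th coefficient).  The `N`-th coefficient of the right-hand side is
`∑_{n ≤ N, n(n+1)/2 = N} (-1)^n (2n+1)` (any `n` with `n(n+1)/2 = N` satisfies `n ≤ N`). -/
theorem jacobi_identity (N : ℕ) :
    (PowerSeries.coeff (R := ℤ) N)
        (∏ m ∈ Finset.range (N + 1), (1 - (PowerSeries.X : PowerSeries ℤ) ^ (m + 1)) ^ 3) =
    ∑ n ∈ Finset.range (N + 1),
      if n * (n + 1) / 2 = N then (-1 : ℤ) ^ n * (2 * n + 1) else 0 :=
  JacobiAux.jacobi_final N
end

section
/- For every nonnegative integer n, the coefficient of q^{5n+1} in ∏_{m≥1}(1-q^{2m})^3 is divisible by 5. -/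
noncomputable section
namespace Eta5

open Finset PowerSeries

abbrev A : Type := PowerSeries ℤ

def Q : A := PowerSeries.X ^ 2

def Pp (a : ℕ) : A := ∏ i ∈ Finset.range a, (1 - Q ^ (i + 1))

def tri : ℕ → ℕ
  | 0 => 0
  | k + 1 => tri k + k

def Bq : ℕ → ℕ → A
  | 0, 0 => 1
  | 0, _ + 1 => 0
  | _ + 1, 0 => 1
  | N + 1, k + 1 => Bq N (k + 1) + Q ^ (N - k) * Bq N k

lemma Bq_zero_right (N : ℕ) : Bq N 0 = 1 := by cases N <;> rfl

lemma Bq_eq_zero : ∀ N k : ℕ, N < k → Bq N k = 0 := by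
  intro N
  induction N with
  | zero => intro k hk; match k, hk with | k+1, _ => rfl
  | succ N ih =>
    intro k hk
    match k, hk with
    | k+1, hk =>
      show Bq N (k+1) + Q ^ (N - k) * Bq N k = 0
      rw [ih (k+1) (by omega), ih k (by omega), mul_zero, add_zero]

lemma Bq_diag : ∀ N : ℕ, Bq N N = 1 := by
  intro N
  induction N with
  | zero => rfl
  | succ N ih =>
    show Bq N (N+1) + Q ^ (N - N) * Bq N N = 1
    rw [Bq_eq_zero N (N+1) (by omega), ih, Nat.sub_self, pow_zero, one_mul, zero_add]

lemma tri_succ (k : ℕ) : tri (k + 1) = tri k + k := rfl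

lemma two_tri (k : ℕ) : 2 * tri k + k = k * k := by
  induction k with
  | zero => rfl
  | succ k ih => rw [tri_succ]; ring_nf; ring_nf at ih; omega

lemma tri_add (a b : ℕ) : tri (a + b) = tri a + tri b + a * b := by
  induction b with
  | zero => simp [tri]
  | succ b ih => rw [← Nat.add_assoc, tri_succ, tri_succ, ih]; ring

lemma constantCoeff_Pp (a : ℕ) : PowerSeries.constantCoeff (Pp a) = 1 := by
  rw [Pp, map_prod]
  refine Finset.prod_eq_one fun i _ => ?_
  rw [map_sub, map_one, map_pow, Q, map_pow, PowerSeries.constantCoeff_X]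
  simp

lemma Pp_ne_zero (a : ℕ) : Pp a ≠ 0 := by
  intro h
  have := constantCoeff_Pp a
  rw [h, map_zero] at this
  exact one_ne_zero this.symm

lemma Pp_succ (a : ℕ) : Pp (a + 1) = Pp a * (1 - Q ^ (a + 1)) := by
  rw [Pp, Pp, Finset.prod_range_succ]

lemma prod_form : ∀ N k : ℕ, k ≤ N → Pp k * Pp (N - k) * Bq N k = Pp N := by
  intro N
  induction N with
  | zero => intro k hk; interval_cases k; simp [Pp, Bq]
  | succ N ih =>
    intro k hk
    match k with
    | 0 => simp [Pp, Bq_zero_right]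
    | k + 1 =>
      show Pp (k+1) * Pp (N + 1 - (k+1)) * (Bq N (k+1) + Q ^ (N - k) * Bq N k) = Pp (N+1)
      rcases Nat.lt_or_ge k N with hkN | hkN
      · set j := N - (k+1) with hj
        have h1 : N + 1 - (k + 1) = j + 1 := by omega
        have h2 : N - k = j + 1 := by omega
        have ih1 := ih (k+1) (by omega)
        have ih2 := ih k (by omega)
        rw [h2] at ih2
        rw [h1, h2]
        have hQ : Q ^ (j+1) * Q ^ (k+1) = Q ^ (N+1) := by
          rw [← pow_add]; congr 1; omega
        calc Pp (k+1) * Pp (j+1) * (Bq N (k+1) + Q ^ (j+1) * Bq N k)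
            = (1 - Q ^ (j+1)) * (Pp (k+1) * Pp j * Bq N (k+1))
              + Q ^ (j+1) * (1 - Q ^ (k+1)) * (Pp k * Pp (j+1) * Bq N k) := by
              rw [Pp_succ j, Pp_succ k]; ring
          _ = (1 - Q ^ (j+1)) * Pp N + Q ^ (j+1) * (1 - Q ^ (k+1)) * Pp N := by
              rw [ih1, ih2]
          _ = (1 - Q ^ (N+1)) * Pp N := by rw [← hQ]; ring
          _ = Pp (N+1) := by rw [Pp_succ]; ring
      · have hk' : N = k := by omega
        subst hk'
        rw [Bq_eq_zero N (N+1) (by omega), Nat.sub_self, Nat.sub_self, pow_zero, one_mul,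
          Bq_diag, zero_add, mul_one]
        have h0 : Pp 0 = 1 := by simp [Pp]
        rw [h0, mul_one, Pp_succ]

lemma Bq_symm (N k : ℕ) (h : k ≤ N) : Bq N k = Bq N (N - k) := by
  have h1 := prod_form N k h
  have h2 := prod_form N (N - k) (by omega)
  have h3 : N - (N - k) = k := by omega
  rw [h3] at h2
  have hne : Pp k * Pp (N - k) ≠ 0 := mul_ne_zero (Pp_ne_zero _) (Pp_ne_zero _)
  apply mul_left_cancel₀ hne
  calc Pp k * Pp (N - k) * Bq N k = Pp N := h1
    _ = Pp (N - k) * Pp k * Bq N (N - k) := h2.symm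
    _ = Pp k * Pp (N - k) * Bq N (N - k) := by ring

lemma Pp_glue (a b : ℕ) (h : a ≤ b) :
    Pp a * ∏ i ∈ Finset.Ico a b, (1 - Q ^ (i + 1)) = Pp b := by
  rw [Pp, Pp, Finset.range_eq_Ico, Finset.range_eq_Ico]
  exact Finset.prod_Ico_consecutive (fun i => 1 - Q ^ (i + 1)) (Nat.zero_le a) h

lemma Pp_mul_Bq (N v k : ℕ) (h1 : k ≤ v) (h2 : v + k ≤ N) :
    Pp v * Bq N k =
      (∏ i ∈ Finset.Ico k v, (1 - Q ^ (i + 1))) *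
        ∏ i ∈ Finset.Ico (N - k) N, (1 - Q ^ (i + 1)) := by
  have hne : Pp k * Pp (N - k) ≠ 0 := mul_ne_zero (Pp_ne_zero _) (Pp_ne_zero _)
  apply mul_left_cancel₀ hne
  calc Pp k * Pp (N - k) * (Pp v * Bq N k)
      = Pp v * (Pp k * Pp (N - k) * Bq N k) := by ring
    _ = Pp v * Pp N := by rw [prod_form N k (by omega)]
    _ = (Pp k * ∏ i ∈ Finset.Ico k v, (1 - Q ^ (i + 1))) *
        (Pp (N - k) * ∏ i ∈ Finset.Ico (N - k) N, (1 - Q ^ (i + 1))) := by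
        rw [Pp_glue k v h1, Pp_glue (N - k) N (by omega)]
    _ = Pp k * Pp (N - k) *
        ((∏ i ∈ Finset.Ico k v, (1 - Q ^ (i + 1))) *
          ∏ i ∈ Finset.Ico (N - k) N, (1 - Q ^ (i + 1))) := by ring

lemma X_pow_dvd_prod_sub_one (s : Finset ℕ) (f : ℕ → ℕ) (E : ℕ)
    (h : ∀ i ∈ s, E ≤ f i) :
    (PowerSeries.X : A) ^ E ∣ (∏ i ∈ s, (1 - (PowerSeries.X : A) ^ f i)) - 1 := by
  classical
  induction s using Finset.cons_induction with
  | empty => simp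
  | cons a s ha ih =>
    rw [Finset.prod_cons]
    have hXa : (PowerSeries.X : A) ^ E ∣ (PowerSeries.X : A) ^ f a :=
      pow_dvd_pow _ (h a (Finset.mem_cons_self a s))
    have ih' := ih fun i hi => h i (Finset.mem_cons_of_mem hi)
    have : (1 - (PowerSeries.X : A) ^ f a) * (∏ i ∈ s, (1 - (PowerSeries.X : A) ^ f i)) - 1
        = ((∏ i ∈ s, (1 - (PowerSeries.X : A) ^ f i)) - 1)
          - (PowerSeries.X : A) ^ f a * ∏ i ∈ s, (1 - (PowerSeries.X : A) ^ f i) := by ring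
    rw [this]
    exact dvd_sub ih' (hXa.mul_right _)

lemma Bq_succ_succ (N k : ℕ) : Bq (N+1) (k+1) = Bq N (k+1) + Q ^ (N - k) * Bq N k := rfl

open Polynomial in
lemma gauss (w N : ℕ) :
    (∏ m ∈ Finset.range N, (Polynomial.C (Q ^ w) + Polynomial.C (Q ^ m) * Polynomial.X)) =
      ∑ k ∈ Finset.range (N + 1),
        Polynomial.C (Bq N k * Q ^ (tri k + w * (N - k))) * Polynomial.X ^ k := by
  induction N with
  | zero => simp [Bq, tri]
  | succ N ih =>
    rw [Finset.prod_range_succ, ih, mul_add]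
    have e1 : (∑ k ∈ Finset.range (N+1),
          Polynomial.C (Bq N k * Q ^ (tri k + w * (N - k))) * Polynomial.X ^ k) *
            Polynomial.C (Q ^ w)
        = ∑ k ∈ Finset.range (N+1),
            Polynomial.C (Bq N k * Q ^ (tri k + w * (N - k) + w)) * Polynomial.X ^ k := by
      rw [Finset.sum_mul]
      refine Finset.sum_congr rfl fun k hk => ?_
      simp only [pow_add, map_mul]; ring
    have e2 : (∑ k ∈ Finset.range (N+1),
          Polynomial.C (Bq N k * Q ^ (tri k + w * (N - k))) * Polynomial.X ^ k) *
            (Polynomial.C (Q ^ N) * Polynomial.X)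
        = ∑ k ∈ Finset.range (N+1),
            Polynomial.C (Bq N k * Q ^ (tri k + w * (N - k) + N)) * Polynomial.X ^ (k+1) := by
      rw [Finset.sum_mul]
      refine Finset.sum_congr rfl fun k hk => ?_
      simp only [pow_add, map_mul, pow_succ]; ring
    rw [e1, e2]
    conv_rhs => rw [Finset.sum_range_succ']
    have e3 : ∀ k ∈ Finset.range (N+1),
        Polynomial.C (Bq (N+1) (k+1) * Q ^ (tri (k+1) + w * (N + 1 - (k+1)))) *
            Polynomial.X ^ (k+1)
          = Polynomial.C (Bq N (k+1) * Q ^ (tri (k+1) + w * (N + 1 - (k+1)))) *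
              Polynomial.X ^ (k+1)
            + Polynomial.C (Bq N k * Q ^ (tri k + w * (N - k) + N)) * Polynomial.X ^ (k+1) := by
      intro k hk
      have hkN : k ≤ N := by simpa using Nat.lt_succ_iff.mp (Finset.mem_range.mp hk)
      obtain ⟨d, hd⟩ : ∃ d, N = k + d := ⟨N - k, by omega⟩
      subst hd
      have h1 : k + d + 1 - (k + 1) = d := by omega
      have h2 : k + d - k = d := by omega
      rw [Bq_succ_succ, h1, h2, add_mul, map_add, add_mul]
      congr 1
      have h4 : tri k + w * d + (k + d) = d + (tri (k + 1) + w * d) := by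
        rw [tri_succ]; ring
      congr 1
      rw [h4, pow_add]
      ring
    rw [Finset.sum_congr rfl e3, Finset.sum_add_distrib]
    have e4 : (∑ k ∈ Finset.range (N+1),
          Polynomial.C (Bq N k * Q ^ (tri k + w * (N - k) + w)) * Polynomial.X ^ k)
        = (∑ k ∈ Finset.range (N+1),
            Polynomial.C (Bq N (k+1) * Q ^ (tri (k+1) + w * (N + 1 - (k+1)))) *
              Polynomial.X ^ (k+1))
          + Polynomial.C (Bq (N+1) 0 * Q ^ (tri 0 + w * (N + 1 - 0))) * Polynomial.X ^ 0 := by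
      rw [Finset.sum_range_succ']
      congr 1
      · rw [Finset.sum_range_succ]
        have htop : Bq N (N+1) = 0 := Bq_eq_zero N (N+1) (by omega)
        rw [htop]
        simp only [zero_mul, map_zero, add_zero]
        refine Finset.sum_congr rfl fun k hk => ?_
        have hkN : k < N := Finset.mem_range.mp hk
        obtain ⟨d, hd⟩ : ∃ d, N = k + 1 + d := ⟨N - (k+1), by omega⟩
        subst hd
        have h1 : k + 1 + d - (k + 1) = d := by omega
        have h2 : k + 1 + d + 1 - (k + 1) = d + 1 := by omega
        rw [h1, h2]
        have h6 : tri (k+1) + w * d + w = tri (k+1) + w * (d + 1) := by ring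
        rw [h6]
      · rw [Bq_zero_right, Bq_zero_right]
        have h5 : tri 0 + w * (N - 0) + w = tri 0 + w * (N + 1 - 0) := by
          simp only [Nat.sub_zero]; ring
        rw [h5]
    rw [e4]
    ring

open Polynomial in
lemma derivative_finset_prod (s : Finset ℕ) (f : ℕ → Polynomial A) :
    Polynomial.derivative (∏ i ∈ s, f i) =
      ∑ i ∈ s, (∏ j ∈ s.erase i, f j) * Polynomial.derivative (f i) := by
  classical
  induction s using Finset.cons_induction with
  | empty => simp
  | cons a s ha ih =>
    rw [Finset.prod_cons, Polynomial.derivative_mul, ih, Finset.sum_cons, Finset.mul_sum,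
      Finset.erase_cons ha]
    refine congrArg₂ (· + ·) ?_ ?_
    · ring
    · refine Finset.sum_congr rfl fun i hi => ?_
      rw [Finset.erase_cons_of_ne ha (by rintro rfl; exact ha hi), Finset.prod_cons]
      ring

lemma tri_eq_sum (v : ℕ) : tri v = ∑ j ∈ Finset.range v, j := by
  induction v with
  | zero => rfl
  | succ v ih => rw [Finset.sum_range_succ, tri_succ, ih]

open Polynomial in
lemma master (v : ℕ) :
    Q ^ v * ((-1 : A) ^ v * Q ^ (tri v + v * v) * Pp v ^ 2) =
      ∑ k ∈ Finset.range (2*v + 2),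
        Bq (2*v+1) k * Q ^ (tri k + v * (2*v + 1 - k)) * (k : A) * (-1 : A) ^ (k - 1) := by
  have hg := gauss v (2*v+1)
  have hE := congrArg (fun p => Polynomial.eval (-1 : A) (Polynomial.derivative p)) hg
  rw [derivative_finset_prod] at hE
  rw [Polynomial.derivative_sum] at hE
  simp only [Polynomial.derivative_add, Polynomial.derivative_C,
    Polynomial.derivative_C_mul_X, zero_add, Polynomial.derivative_C_mul_X_pow] at hE
  rw [Polynomial.eval_finset_sum, Polynomial.eval_finset_sum] at hE
  simp only [Polynomial.eval_mul, Polynomial.eval_prod, Polynomial.eval_add,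
    Polynomial.eval_C, Polynomial.eval_pow, Polynomial.eval_X] at hE
  rw [Finset.sum_eq_single v (fun m hm hmv => ?_) (fun hv => ?_)] at hE
  rotate_left
  · -- m ≠ v: product contains zero factor
    apply mul_eq_zero_of_left
    refine Finset.prod_eq_zero (i := v) ?_ ?_
    · rw [Finset.mem_erase]
      exact ⟨fun h => hmv h.symm, Finset.mem_range.mpr (by omega)⟩
    · ring
  · exact absurd (Finset.mem_range.mpr (by omega)) hv
  · -- main computation
    have hsplit : (Finset.range (2*v+1)).erase v
        = Finset.range v ∪ Finset.Ico (v+1) (2*v+1) := by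
      ext x
      simp only [Finset.mem_erase, Finset.mem_range, Finset.mem_union, Finset.mem_Ico]
      omega
    have hdisj : Disjoint (Finset.range v) (Finset.Ico (v+1) (2*v+1)) := by
      rw [Finset.disjoint_left]
      intro x hx hx'
      simp only [Finset.mem_range] at hx
      simp only [Finset.mem_Ico] at hx'
      omega
    rw [hsplit, Finset.prod_union hdisj] at hE
    have p1 : (∏ j ∈ Finset.range v, (Q ^ v + Q ^ j * (-1 : A)))
        = (-1 : A) ^ v * Q ^ (tri v) * Pp v := by
      have step : ∀ j ∈ Finset.range v,
          (Q ^ v + Q ^ j * (-1 : A)) = (-1 : A) * Q ^ j * (1 - Q ^ (v - j)) := by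
        intro j hj
        have hj' : j < v := Finset.mem_range.mp hj
        have hq : Q ^ j * Q ^ (v - j) = Q ^ v := by
          rw [← pow_add]; congr 1; omega
        rw [← hq]; ring
      rw [Finset.prod_congr rfl step, Finset.prod_mul_distrib, Finset.prod_mul_distrib,
        Finset.prod_const, Finset.card_range, Finset.prod_pow_eq_pow_sum, ← tri_eq_sum]
      congr 1
      have refl : ∀ j ∈ Finset.range v, (1 - Q ^ (v - j)) = (fun i => 1 - Q ^ (i+1)) (v - 1 - j) := by
        intro j hj
        have hj' : j < v := Finset.mem_range.mp hj
        simp only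
        congr 1
        congr 1
        omega
      rw [Finset.prod_congr rfl refl, Finset.prod_range_reflect (fun i => 1 - Q ^ (i+1)) v]
      rfl
    have p2 : (∏ j ∈ Finset.Ico (v+1) (2*v+1), (Q ^ v + Q ^ j * (-1 : A)))
        = Q ^ (v * v) * Pp v := by
      rw [Finset.prod_Ico_eq_prod_range]
      have hb : 2*v+1 - (v+1) = v := by omega
      rw [hb]
      have step : ∀ i ∈ Finset.range v,
          (Q ^ v + Q ^ (v+1+i) * (-1 : A)) = Q ^ v * (1 - Q ^ (i+1)) := by
        intro i hi
        have hq : Q ^ v * Q ^ (i+1) = Q ^ (v+1+i) := by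
          rw [← pow_add]; congr 1; omega
        rw [← hq]; ring
      rw [Finset.prod_congr rfl step, Finset.prod_mul_distrib, Finset.prod_const,
        Finset.card_range, ← pow_mul]
      rfl
    rw [p1, p2] at hE
    calc Q ^ v * ((-1 : A) ^ v * Q ^ (tri v + v * v) * Pp v ^ 2)
        = ((-1:A)^v * Q ^ (tri v) * Pp v) * (Q ^ (v*v) * Pp v) * Q ^ v := by
          rw [pow_add]; ring
      _ = ∑ k ∈ Finset.range (2*v + 2),
            Bq (2*v+1) k * Q ^ (tri k + v * (2*v + 1 - k)) * (k : A) * (-1 : A) ^ (k - 1) := by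
          rw [hE]

lemma Q_pow (a : ℕ) : Q ^ a = (PowerSeries.X : A) ^ (2 * a) := by
  rw [Q, ← pow_mul]

lemma neg_one_pow_cases (j : ℕ) : ((-1 : A)) ^ j = 1 ∨ ((-1 : A)) ^ j = -1 :=
  (Nat.even_or_odd j).elim (fun h => Or.inl h.neg_one_pow) fun h => Or.inr h.neg_one_pow

lemma X_pow_dvd_mul_sub_one (a b : A) (E : ℕ)
    (ha : (PowerSeries.X : A) ^ E ∣ a - 1) (hb : (PowerSeries.X : A) ^ E ∣ b - 1) :
    (PowerSeries.X : A) ^ E ∣ a * b - 1 := by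
  have : a * b - 1 = (a - 1) * b + (b - 1) := by ring
  rw [this]
  exact dvd_add (ha.mul_right b) hb

set_option maxHeartbeats 1000000 in
lemma zmod_key : ∀ x vv dd Tk Tv nn : ZMod 5,
    (2 * Tk + x = x * x ∧ x + dd = 2 * vv + 1 ∧ vv = 5 * nn + 2 ∧
      2 * Tv + vv = vv * vv ∧
      (5 * nn + 1) + 2 * (vv + (Tv + vv * vv)) = 2 * (Tk + vv * dd)) → x = 0 := by decide

lemma coeff_Pp_mul_Bq_eq_zero (v k' m : ℕ) (h1 : k' ≤ v) (hm0 : m ≠ 0)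
    (hm : m < 2 * (k' + 1)) :
    PowerSeries.coeff m (Pp v * Bq (2 * v + 1) k') = 0 := by
  rw [Pp_mul_Bq (2 * v + 1) v k' h1 (by omega)]
  have hq : ∀ s : Finset ℕ, (∏ i ∈ s, (1 - Q ^ (i + 1)))
      = ∏ i ∈ s, (1 - (PowerSeries.X : A) ^ (2 * (i + 1))) := by
    intro s
    exact Finset.prod_congr rfl fun i _ => by rw [Q_pow]
  rw [hq, hq]
  have hd1 : (PowerSeries.X : A) ^ (2 * (k' + 1)) ∣
      (∏ i ∈ Finset.Ico k' v, (1 - (PowerSeries.X : A) ^ (2 * (i + 1)))) - 1 :=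
    X_pow_dvd_prod_sub_one _ _ _ (fun i hi => by
      have := (Finset.mem_Ico.mp hi).1; omega)
  have hd2 : (PowerSeries.X : A) ^ (2 * (k' + 1)) ∣
      (∏ i ∈ Finset.Ico (2 * v + 1 - k') (2 * v + 1),
        (1 - (PowerSeries.X : A) ^ (2 * (i + 1)))) - 1 :=
    X_pow_dvd_prod_sub_one _ _ _ (fun i hi => by
      have := (Finset.mem_Ico.mp hi).1; omega)
  have hdvd := X_pow_dvd_mul_sub_one _ _ _ hd1 hd2
  set W := (∏ i ∈ Finset.Ico k' v, (1 - (PowerSeries.X : A) ^ (2 * (i + 1)))) *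
      ∏ i ∈ Finset.Ico (2 * v + 1 - k') (2 * v + 1),
        (1 - (PowerSeries.X : A) ^ (2 * (i + 1))) with hW
  have : W = 1 + (W - 1) := by ring
  rw [this, map_add, PowerSeries.coeff_one, if_neg hm0, zero_add]
  exact PowerSeries.X_pow_dvd_iff.mp hdvd m hm

theorem main (n : ℕ) :
    (5 : ℤ) ∣
      (PowerSeries.coeff (5 * n + 1))
        (∏ m ∈ Finset.range (5 * n + 2),
          (1 - (PowerSeries.X : PowerSeries ℤ) ^ (2 * (m + 1))) ^ 3) := by
  have hprod : (∏ m ∈ Finset.range (5 * n + 2),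
        (1 - (PowerSeries.X : PowerSeries ℤ) ^ (2 * (m + 1))) ^ 3)
      = Pp (5 * n + 2) ^ 3 := by
    rw [Pp, ← Finset.prod_pow]
    exact Finset.prod_congr rfl fun i _ => by rw [Q_pow]
  rw [hprod]
  set v : ℕ := 5 * n + 2 with hv
  have key := master v
  have key1 := congrArg (fun z => (-1 : A) ^ v * (z * Pp v)) key
  have hL : (-1 : A) ^ v * ((Q ^ v * ((-1 : A) ^ v * Q ^ (tri v + v * v) * Pp v ^ 2)) * Pp v)
      = (PowerSeries.X : A) ^ (2 * (v + (tri v + v * v))) * Pp v ^ 3 := by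
    have h1 : ((-1 : A) ^ v) * ((-1 : A) ^ v) = 1 := by
      rw [← pow_add]
      exact Even.neg_one_pow ⟨v, by ring⟩
    calc (-1 : A) ^ v * ((Q ^ v * ((-1 : A) ^ v * Q ^ (tri v + v * v) * Pp v ^ 2)) * Pp v)
        = (((-1 : A) ^ v) * ((-1 : A) ^ v)) * ((Q ^ v * Q ^ (tri v + v * v)) * Pp v ^ 3) := by
          ring
      _ = (Q ^ (v + (tri v + v * v))) * Pp v ^ 3 := by rw [h1, one_mul, ← pow_add]
      _ = (PowerSeries.X : A) ^ (2 * (v + (tri v + v * v))) * Pp v ^ 3 := by rw [Q_pow]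
  rw [hL, Finset.sum_mul, Finset.mul_sum] at key1
  have hco := congrArg (PowerSeries.coeff (5 * n + 1 + 2 * (v + (tri v + v * v)))) key1
  rw [PowerSeries.coeff_X_pow_mul, map_sum] at hco
  rw [hco]
  refine Finset.dvd_sum fun k hk => ?_
  have hkN : k ≤ 2 * v + 1 := by
    have := Finset.mem_range.mp hk; omega
  have hterm : (-1 : A) ^ v *
        (Bq (2 * v + 1) k * Q ^ (tri k + v * (2 * v + 1 - k)) * (k : A) * (-1 : A) ^ (k - 1)
          * Pp v)
      = (k : ℤ) • ((-1 : A) ^ (v + (k - 1)) *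
          ((PowerSeries.X : A) ^ (2 * (tri k + v * (2 * v + 1 - k))) *
            (Pp v * Bq (2 * v + 1) k))) := by
    rw [zsmul_eq_mul, pow_add, ← Q_pow]
    push_cast
    ring
  rw [hterm, map_zsmul, smul_eq_mul]
  by_cases h5k : (5 : ℕ) ∣ k
  · exact dvd_mul_of_dvd_left (by exact_mod_cast Int.natCast_dvd_natCast.mpr h5k) _
  · have hzero : PowerSeries.coeff (5 * n + 1 + 2 * (v + (tri v + v * v)))
        ((PowerSeries.X : A) ^ (2 * (tri k + v * (2 * v + 1 - k))) *
          (Pp v * Bq (2 * v + 1) k)) = 0 := by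
      set d : ℕ := 2 * v + 1 - k with hd
      set e : ℕ := tri k + v * d with he
      set M : ℕ := 5 * n + 1 + 2 * (v + (tri v + v * v)) with hM
      rw [PowerSeries.coeff_X_pow_mul']
      split_ifs with hle
      · by_cases hm0 : M - 2 * e = 0
        · exfalso
          apply h5k
          have hMe : M = 2 * e := le_antisymm (Nat.sub_eq_zero_iff_le.mp hm0) hle
          rw [hM, he] at hMe
          have hkd : k + d = 2 * v + 1 := by rw [hd]; omega
          have c1 : (2 : ZMod 5) * (tri k : ZMod 5) + (k : ZMod 5)
              = (k : ZMod 5) * (k : ZMod 5) := by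
            have h := congrArg (fun x : ℕ => (x : ZMod 5)) (two_tri k)
            push_cast at h; exact_mod_cast h
          have c2 : (2 : ZMod 5) * (tri v : ZMod 5) + (v : ZMod 5)
              = (v : ZMod 5) * (v : ZMod 5) := by
            have h := congrArg (fun x : ℕ => (x : ZMod 5)) (two_tri v)
            push_cast at h; exact_mod_cast h
          have c3 : (k : ZMod 5) + (d : ZMod 5) = 2 * (v : ZMod 5) + 1 := by
            have h := congrArg (fun x : ℕ => (x : ZMod 5)) hkd
            push_cast at h; exact_mod_cast h
          have c4 : (v : ZMod 5) = 5 * (n : ZMod 5) + 2 := by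
            rw [hv]; push_cast; ring
          have c5 : (5 * (n : ZMod 5) + 1) +
                2 * ((v : ZMod 5) + ((tri v : ZMod 5) + (v : ZMod 5) * (v : ZMod 5)))
              = 2 * ((tri k : ZMod 5) + (v : ZMod 5) * (d : ZMod 5)) := by
            have h := congrArg (fun x : ℕ => (x : ZMod 5)) hMe
            push_cast at h; exact_mod_cast h
          have hx := zmod_key (k : ZMod 5) (v : ZMod 5) (d : ZMod 5)
            (tri k : ZMod 5) (tri v : ZMod 5) (n : ZMod 5) ⟨c1, c3, c4, c2, c5⟩
          exact (ZMod.natCast_eq_zero_iff k 5).mp hx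
        · have htk : 2 * (tri k : ℤ) + (k : ℤ) = (k : ℤ) * (k : ℤ) := by
            exact_mod_cast two_tri k
          have htv : 2 * (tri v : ℤ) + (v : ℤ) = (v : ℤ) * (v : ℤ) := by
            exact_mod_cast two_tri v
          have hvz : (v : ℤ) = 5 * (n : ℤ) + 2 := by rw [hv]; push_cast; ring
          have hdz : (d : ℤ) = 2 * (v : ℤ) + 1 - (k : ℤ) := by
            rw [hd]; push_cast [Nat.cast_sub hkN]; ring
          have hmz : ((M - 2 * e : ℕ) : ℤ) = (M : ℤ) - 2 * (e : ℤ) := by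
            push_cast [Nat.cast_sub hle]; ring
          have hMz : (M : ℤ) = 5 * (n : ℤ) + 1 + 2 * ((v : ℤ) + ((tri v : ℤ) + (v:ℤ)*(v:ℤ))) := by
            rw [hM]; push_cast; ring
          have hez : (e : ℤ) = (tri k : ℤ) + (v : ℤ) * (d : ℤ) := by
            rw [he]; push_cast; ring
          have hm2 : 2 * ((M - 2*e : ℕ) : ℤ)
              = 10*(n:ℤ) + 2 - 2*(v:ℤ) + 2*(k:ℤ) - 2*((v:ℤ)-(k:ℤ))^2 := by
            linear_combination 2*hmz + 2*hMz - 4*hez - 4*(v:ℤ)*hdz - 2*htk + 2*htv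
          by_cases hkv : k ≤ v
          · apply coeff_Pp_mul_Bq_eq_zero v k _ hkv hm0
            have hgoal : ((M - 2*e : ℕ) : ℤ) < 2 * ((k : ℤ) + 1) := by
              linarith [hm2, sq_nonneg ((v:ℤ)-(k:ℤ)), hvz]
            exact_mod_cast hgoal
          · rw [Bq_symm (2*v+1) k (by omega)]
            have h2 : 2*v+1-k ≤ v := by omega
            have hdd : 2*v+1-k = d := by rw [hd]
            rw [hdd]
            apply coeff_Pp_mul_Bq_eq_zero v d _ h2 hm0
            have hexp : ((k:ℤ)-(v:ℤ)-2)^2 = ((v:ℤ)-(k:ℤ))^2 - 4*((k:ℤ)-(v:ℤ)) + 4 := by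
              ring
            have hgoal : ((M - 2*e : ℕ) : ℤ) < 2 * ((d : ℤ) + 1) := by
              linarith [hm2, sq_nonneg ((k:ℤ)-(v:ℤ)-2), hexp, hvz, hdz]
            exact_mod_cast hgoal
      · rfl
    have hzero2 : PowerSeries.coeff (5 * n + 1 + 2 * (v + (tri v + v * v)))
        ((-1 : A) ^ (v + (k - 1)) *
          ((PowerSeries.X : A) ^ (2 * (tri k + v * (2 * v + 1 - k))) *
            (Pp v * Bq (2 * v + 1) k))) = 0 := by
      rcases neg_one_pow_cases (v + (k - 1)) with hs | hs <;> rw [hs]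
      · rw [one_mul]; exact hzero
      · rw [neg_one_mul, map_neg, hzero, neg_zero]
    rw [hzero2, mul_zero]
    exact dvd_zero _

end Eta5

end

open Finset PowerSeries

/-- For every `n`, the coefficient of `q^{5n+1}` in `∏_{m≥1} (1-q^{2m})^3` is divisible by 5.
The product is truncated at `m = 5n+2`, which does not affect this coefficient. -/
theorem coeff_5np1_cube_even_eta (n : ℕ) :
    (5 : ℤ) ∣
      (PowerSeries.coeff (5 * n + 1))
        (∏ m ∈ Finset.range (5 * n + 2),
          (1 - (PowerSeries.X : PowerSeries ℤ) ^ (2 * (m + 1))) ^ 3) :=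
  Eta5.main n
end

section
/- For every nonnegative integer n, the coefficient of q^{5n+3} and the coefficient of q^{5n+4} in the formal power series ∏_{m≥1}(1-q^m) are both zero. -/
open Finset PowerSeries

namespace PentagonalAux

lemma sum_Icc_gauss {a b : ℕ} (hab : a ≤ b + 1) :
    (Finset.Icc a b).sum id * 2 + a * (a - 1) = (b + 1) * b := by
  have he : Finset.Icc a b = Finset.range (b+1) \ Finset.range a := by
    ext x; simp [Finset.mem_Icc, Finset.mem_sdiff, Finset.mem_range]; omega
  have hsub : Finset.range a ⊆ Finset.range (b+1) := by
    intro x hx; simp only [Finset.mem_range] at *; omega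
  have h1 := Finset.sum_sdiff (f := id) hsub
  have g1 := Finset.sum_range_id_mul_two (b+1)
  have g2 := Finset.sum_range_id_mul_two a
  rw [he]
  simp only [id, Nat.add_sub_cancel] at *
  linarith [g1, g2, h1]

lemma max_getD_eq {D : Finset ℕ} {a : ℕ} (ha : a ∈ D) (h : ∀ x ∈ D, x ≤ a) :
    D.max.getD 0 = a := by
  have hD : D.Nonempty := ⟨a, ha⟩
  have h1 : D.max = (D.max' hD : ℕ) := (Finset.coe_max' hD).symm
  rw [h1]
  show D.max' hD = a
  exact le_antisymm (Finset.max'_le _ _ _ h) (Finset.le_max' _ _ ha)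

lemma min_getD_eq {D : Finset ℕ} {a : ℕ} (ha : a ∈ D) (h : ∀ x ∈ D, a ≤ x) :
    D.min.getD 0 = a := by
  have hD : D.Nonempty := ⟨a, ha⟩
  have h1 : D.min = (D.min' hD : ℕ) := (Finset.coe_min' hD).symm
  rw [h1]
  show D.min' hD = a
  exact le_antisymm (Finset.min'_le _ _ ha) (Finset.le_min' _ _ _ h)

lemma max_getD_mem {D : Finset ℕ} (hD : D.Nonempty) : D.max.getD 0 ∈ D := by
  have h1 : D.max = (D.max' hD : ℕ) := (Finset.coe_max' hD).symm
  rw [h1]; exact Finset.max'_mem _ hD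

lemma min_getD_mem {D : Finset ℕ} (hD : D.Nonempty) : D.min.getD 0 ∈ D := by
  have h1 : D.min = (D.min' hD : ℕ) := (Finset.coe_min' hD).symm
  rw [h1]; exact Finset.min'_mem _ hD

lemma le_max_getD {D : Finset ℕ} {x : ℕ} (hx : x ∈ D) : x ≤ D.max.getD 0 := by
  have h1 : D.max = (D.max' ⟨x, hx⟩ : ℕ) := (Finset.coe_max' _).symm
  rw [h1]; exact Finset.le_max' _ _ hx

lemma min_getD_le {D : Finset ℕ} {x : ℕ} (hx : x ∈ D) : D.min.getD 0 ≤ x := by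
  have h1 : D.min = (D.min' ⟨x, hx⟩ : ℕ) := (Finset.coe_min' _).symm
  rw [h1]; exact Finset.min'_le _ _ hx

lemma sum_Icc_shift (a b : ℕ) :
    (Finset.Icc (a+1) (b+1)).sum id = (Finset.Icc a b).sum id + (b + 1 - a) := by
  have h : Finset.Icc (a+1) (b+1) = (Finset.Icc a b).image (fun x => x + 1) := by
    rw [Finset.image_add_right_Icc]
  rw [h, Finset.sum_image (by intro x _ y _ h; simp only at h; omega)]
  rcases le_or_gt a b with hab | hab
  · rw [show (Finset.Icc a b).sum (fun x => id (x+1)) = (Finset.Icc a b).sum id + (Finset.Icc a b).card from by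
      simp [Finset.sum_add_distrib]]
    rw [Nat.card_Icc]
  · rw [Finset.Icc_eq_empty (by omega)]; simp; omega

-- pentagonal exclusions
lemma pentA {s N : ℕ} (h1 : 1 ≤ s) (h : (Finset.Icc s (2*s-1)).sum id = N) :
    ¬ (N % 5 = 3 ∨ N % 5 = 4) := by
  have h2 := sum_Icc_gauss (a := s) (b := 2*s-1) (by omega)
  have h3 : 2 * N + s = 3 * s * s := by
    rw [← h]
    have hs1 : s - 1 + 1 = s := by omega
    have hb : 2*s-1+1 = 2*s := by omega
    nlinarith [h2]
  intro hN
  have hc : ((2 * N + s : ℕ) : ZMod 5) = ((3 * s * s : ℕ) : ZMod 5) := by rw [h3]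
  push_cast at hc
  have hNc : ((N : ℕ) : ZMod 5) = ((N % 5 : ℕ) : ZMod 5) := (ZMod.natCast_mod N 5).symm
  rcases hN with hN | hN <;> rw [hN] at hNc <;>
  · rw [hNc] at hc
    push_cast at hc
    revert hc
    generalize ((s : ℕ) : ZMod 5) = x
    revert x; decide

lemma pentB {g N : ℕ} (h1 : 1 ≤ g) (h : (Finset.Icc (g+1) (2*g)).sum id = N) :
    ¬ (N % 5 = 3 ∨ N % 5 = 4) := by
  have h2 := sum_Icc_gauss (a := g+1) (b := 2*g) (by omega)
  have h3 : 2 * N = 3 * g * g + g := by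
    rw [← h]
    simp only [Nat.add_sub_cancel] at h2
    nlinarith [h2]
  intro hN
  have hc : ((2 * N : ℕ) : ZMod 5) = ((3 * g * g + g : ℕ) : ZMod 5) := by rw [h3]
  push_cast at hc
  have hNc : ((N : ℕ) : ZMod 5) = ((N % 5 : ℕ) : ZMod 5) := (ZMod.natCast_mod N 5).symm
  rcases hN with hN | hN <;> rw [hN] at hNc <;>
  · rw [hNc] at hc
    push_cast at hc
    revert hc
    generalize ((g : ℕ) : ZMod 5) = x
    revert x; decide

def Fr (S : Finset ℕ) : Finset ℕ :=
  let m := S.max.getD 0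
  let s := S.min.getD 0
  let g := ((Finset.range (m+1)) \ S).max.getD 0
  if s + g ≤ m ∧ s + s ≤ m then
    ((S.erase s) \ Finset.Icc (m - s + 1) m) ∪ Finset.Icc (m - s + 2) (m+1)
  else
    ((S \ Finset.Icc (g+1) m) ∪ Finset.Icc g (m-1)) ∪ {m - g}

lemma Fr_def (S : Finset ℕ) :
    Fr S =
      if S.min.getD 0 + ((Finset.range (S.max.getD 0 + 1)) \ S).max.getD 0 ≤ S.max.getD 0
          ∧ S.min.getD 0 + S.min.getD 0 ≤ S.max.getD 0 then
        ((S.erase (S.min.getD 0)) \ Finset.Icc (S.max.getD 0 - S.min.getD 0 + 1) (S.max.getD 0))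
          ∪ Finset.Icc (S.max.getD 0 - S.min.getD 0 + 2) (S.max.getD 0 + 1)
      else
        ((S \ Finset.Icc (((Finset.range (S.max.getD 0 + 1)) \ S).max.getD 0 + 1) (S.max.getD 0))
          ∪ Finset.Icc (((Finset.range (S.max.getD 0 + 1)) \ S).max.getD 0) (S.max.getD 0 - 1))
          ∪ {S.max.getD 0 - ((Finset.range (S.max.getD 0 + 1)) \ S).max.getD 0} := rfl


lemma Fr_spec {N : ℕ} (hN : N % 5 = 3 ∨ N % 5 = 4) {S : Finset ℕ}
    (h0 : 0 ∉ S) (hsum : S.sum id = N) :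
    (0 ∉ Fr S ∧ (Fr S).sum id = N) ∧
    ((Fr S).card = S.card + 1 ∨ S.card = (Fr S).card + 1) ∧
    Fr (Fr S) = S := by
  have hNpos : 3 ≤ N := by omega
  have hne : S.Nonempty := by
    rcases S.eq_empty_or_nonempty with h | h
    · exfalso; rw [h] at hsum; simp at hsum; omega
    · exact h
  obtain ⟨m, hmdef⟩ : ∃ m, S.max.getD 0 = m := ⟨_, rfl⟩
  have hmS : m ∈ S := hmdef ▸ max_getD_mem hne
  have hmax : ∀ x ∈ S, x ≤ m := fun x hx => hmdef ▸ le_max_getD hx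
  obtain ⟨s, hsdef⟩ : ∃ s, S.min.getD 0 = s := ⟨_, rfl⟩
  have hsS : s ∈ S := hsdef ▸ min_getD_mem hne
  have hmin : ∀ x ∈ S, s ≤ x := fun x hx => hsdef ▸ min_getD_le hx
  have hs1 : 1 ≤ s := by
    rcases Nat.eq_zero_or_pos s with h | h
    · exact absurd (h ▸ hsS) h0
    · exact h
  have hsm : s ≤ m := hmin m hmS
  have hm1 : 1 ≤ m := le_trans hs1 hsm
  obtain ⟨g, hgdef⟩ : ∃ g, ((Finset.range (m+1)) \ S).max.getD 0 = g := ⟨_, rfl⟩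
  have hDne : ((Finset.range (m+1)) \ S).Nonempty := ⟨0, by simp [h0]⟩
  have hgD : g ∈ (Finset.range (m+1)) \ S := hgdef ▸ max_getD_mem hDne
  have hgS : g ∉ S := (Finset.mem_sdiff.1 hgD).2
  have hgm : g < m := by
    have := Finset.mem_range.1 (Finset.mem_sdiff.1 hgD).1
    rcases Nat.lt_or_ge g m with h | h
    · exact h
    · exfalso; have : g = m := by omega
      exact hgS (this ▸ hmS)
  have hrun : ∀ x, g < x → x ≤ m → x ∈ S := by
    intro x hgx hxm
    by_contra hxS
    have hxD : x ∈ (Finset.range (m+1)) \ S := by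
      simp only [Finset.mem_sdiff, Finset.mem_range]; exact ⟨by omega, hxS⟩
    have := hgdef ▸ le_max_getD hxD
    omega
  by_cases hC : s + g ≤ m ∧ s + s ≤ m
  · -- CASE 1
    obtain ⟨hC1, hC2⟩ := hC
    have hT : Fr S = ((S.erase s) \ Finset.Icc (m - s + 1) m) ∪ Finset.Icc (m - s + 2) (m+1) := by
      rw [Fr_def, hmdef, hsdef, hgdef, if_pos ⟨hC1, hC2⟩]
    have hmemT : ∀ x, x ∈ Fr S ↔
        ((x ∈ S ∧ x ≠ s ∧ ¬(m-s+1 ≤ x ∧ x ≤ m)) ∨ (m-s+2 ≤ x ∧ x ≤ m+1)) := by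
      intro x
      rw [hT]
      simp only [Finset.mem_union, Finset.mem_sdiff, Finset.mem_erase, Finset.mem_Icc]
      tauto
    have hrun1 : ∀ x, m-s+1 ≤ x → x ≤ m → x ∈ S := by
      intro x h1 h2; exact hrun x (by omega) h2
    -- decomposition of S
    have hd1 : Disjoint ((S.erase s) \ Finset.Icc (m-s+1) m) (Finset.Icc (m-s+1) m) :=
      Finset.sdiff_disjoint
    have hsIcc : s ∉ Finset.Icc (m-s+1) m := by
      simp only [Finset.mem_Icc]; omega
    have hd2 : Disjoint (((S.erase s) \ Finset.Icc (m-s+1) m) ∪ Finset.Icc (m-s+1) m) {s} := by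
      rw [Finset.disjoint_singleton_right]
      simp only [Finset.mem_union, Finset.mem_sdiff, Finset.mem_erase, Finset.mem_Icc]
      rintro (⟨⟨hne', -⟩, -⟩ | ⟨h1, h2⟩)
      · exact hne' rfl
      · omega
    have hdecomp : S = (((S.erase s) \ Finset.Icc (m-s+1) m) ∪ Finset.Icc (m-s+1) m) ∪ {s} := by
      ext x
      simp only [Finset.mem_union, Finset.mem_sdiff, Finset.mem_erase, Finset.mem_Icc,
        Finset.mem_singleton]
      constructor
      · intro hx
        by_cases h1 : x = s
        · right; exact h1
        · by_cases h2 : m-s+1 ≤ x ∧ x ≤ m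
          · left; right; exact h2
          · left; left; exact ⟨⟨h1, hx⟩, h2⟩
      · rintro ((⟨⟨_, hx⟩, _⟩ | ⟨h1, h2⟩) | rfl)
        · exact hx
        · exact hrun1 x h1 h2
        · exact hsS
    have hd3 : Disjoint ((S.erase s) \ Finset.Icc (m-s+1) m) (Finset.Icc (m-s+2) (m+1)) := by
      rw [Finset.disjoint_left]
      intro x hx hx2
      simp only [Finset.mem_sdiff, Finset.mem_erase, Finset.mem_Icc] at hx hx2
      have := hmax x hx.1.2
      omega
    have hsumS : S.sum id = ((S.erase s) \ Finset.Icc (m-s+1) m).sum id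
        + (Finset.Icc (m-s+1) m).sum id + s := by
      conv_lhs => rw [hdecomp]
      rw [Finset.sum_union hd2, Finset.sum_union hd1]
      simp
    have hcardS : S.card = ((S.erase s) \ Finset.Icc (m-s+1) m).card + s + 1 := by
      conv_lhs => rw [hdecomp]
      rw [Finset.card_union_of_disjoint hd2, Finset.card_union_of_disjoint hd1]
      rw [Nat.card_Icc]
      simp
      omega
    have hshift : (Finset.Icc (m-s+2) (m+1)).sum id = (Finset.Icc (m-s+1) m).sum id + s := by
      have h := sum_Icc_shift (m-s+1) m
      have e1 : m - s + 1 + 1 = m - s + 2 := by omega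
      rw [e1] at h
      omega
    have hsumT : (Fr S).sum id = N := by
      rw [hT, Finset.sum_union hd3, hshift]
      simp only [Function.id_def] at hsum hsumS hshift ⊢
      omega
    have hcardT : S.card = (Fr S).card + 1 := by
      rw [hT, Finset.card_union_of_disjoint hd3, Nat.card_Icc]
      omega
    have h0T : 0 ∉ Fr S := by
      rw [hmemT]
      push_neg
      constructor
      · intro h; exact absurd h h0
      · omega
    refine ⟨⟨h0T, hsumT⟩, Or.inr hcardT, ?_⟩
    -- compute Fr (Fr S)
    have hmemT' : m+1 ∈ Fr S := (hmemT (m+1)).2 (Or.inr ⟨by omega, le_rfl⟩)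
    have hTne : (Fr S).Nonempty := ⟨m+1, hmemT'⟩
    have hmT : (Fr S).max.getD 0 = m+1 := by
      apply max_getD_eq hmemT'
      intro x hx
      rw [hmemT] at hx
      rcases hx with ⟨hx, -, -⟩ | ⟨-, h2⟩
      · have := hmax x hx; omega
      · omega
    obtain ⟨t, htdef⟩ : ∃ t, (Fr S).min.getD 0 = t := ⟨_, rfl⟩
    have htT : t ∈ Fr S := htdef ▸ min_getD_mem hTne
    have hst : s < t := by
      rw [hmemT] at htT
      rcases htT with ⟨hx, hne', -⟩ | ⟨h2, -⟩
      · have := hmin t hx; omega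
      · omega
    have hgT : ((Finset.range (m+1+1)) \ (Fr S)).max.getD 0 = m+1-s := by
      apply max_getD_eq
      · simp only [Finset.mem_sdiff, Finset.mem_range]
        constructor
        · omega
        · rw [hmemT]
          push_neg
          constructor
          · intro h; omega
          · omega
      · intro x hx
        simp only [Finset.mem_sdiff, Finset.mem_range] at hx
        by_contra hlt
        exact hx.2 ((hmemT x).2 (Or.inr ⟨by omega, by omega⟩))
    rw [Fr_def, hmT, hgT, htdef, if_neg (by omega)]
    have e1 : m+1-s+1 = m-s+2 := by omega
    have e2 : m+1-1 = m := by omega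
    have e3 : m+1-(m+1-s) = s := by omega
    have e4 : m+1-s = m-s+1 := by omega
    rw [e1, e2, e3, e4]
    ext x
    simp only [Finset.mem_union, Finset.mem_sdiff, Finset.mem_Icc, Finset.mem_singleton, hmemT]
    constructor
    · rintro ((⟨⟨hx, -, -⟩ | ⟨h1, h2⟩, hni⟩ | ⟨h1, h2⟩) | rfl)
      · exact hx
      · exact absurd ⟨h1, h2⟩ hni
      · exact hrun1 x h1 h2
      · exact hsS
    · intro hx
      have hxm := hmax x hx
      by_cases h1 : x = s
      · right; exact h1
      · by_cases h2 : m-s+1 ≤ x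
        · left; right; exact ⟨h2, hxm⟩
        · left; left
          exact ⟨Or.inl ⟨hx, h1, by omega⟩, by omega⟩
  · -- CASE 2
    have hi : m < s + g := by
      by_contra hle
      have hsg : s + g ≤ m := by omega
      have h2s : m < s + s := by omega
      have hg_ge : s - 1 ≤ g := by
        have hmem : s - 1 ∈ Finset.range (m+1) \ S := by
          simp only [Finset.mem_sdiff, Finset.mem_range]
          refine ⟨by omega, fun hmem => ?_⟩
          have := hmin _ hmem; omega
        have := hgdef ▸ le_max_getD hmem
        omega
      have hSeq : S = Finset.Icc s m := by
        ext x; simp only [Finset.mem_Icc]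
        constructor
        · intro hx; exact ⟨hmin x hx, hmax x hx⟩
        · rintro ⟨h1, h2⟩; exact hrun x (by omega) h2
      have hm2s : m = 2*s - 1 := by omega
      refine pentA hs1 ?_ hN
      rw [hSeq, hm2s] at hsum; exact hsum
    have hii : m < 2*g := by
      by_contra h2g
      have h2g' : 2*g ≤ m := by omega
      have hSeq : S = Finset.Icc (g+1) m := by
        ext x; simp only [Finset.mem_Icc]
        constructor
        · intro hx
          have h1 := hmin x hx; have h2 := hmax x hx
          exact ⟨by omega, h2⟩
        · rintro ⟨h1, h2⟩; exact hrun x (by omega) h2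
      have hgS1 : g + 1 ∈ S := by rw [hSeq]; simp only [Finset.mem_Icc]; omega
      have hs_eq : s = g + 1 := by
        have h1 := hmin _ hgS1; omega
      have hmeq : m = 2*g := by omega
      have hg1 : 1 ≤ g := by omega
      refine pentB hg1 ?_ hN
      rw [hSeq, hmeq] at hsum; exact hsum
    have hT : Fr S = ((S \ Finset.Icc (g+1) m) ∪ Finset.Icc g (m-1)) ∪ {m-g} := by
      rw [Fr_def, hmdef, hsdef, hgdef, if_neg (by omega)]
    have hmemT : ∀ x, x ∈ Fr S ↔
        ((x ∈ S ∧ ¬(g+1 ≤ x ∧ x ≤ m)) ∨ (g ≤ x ∧ x ≤ m-1) ∨ x = m-g) := by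
      intro x
      rw [hT]
      simp only [Finset.mem_union, Finset.mem_sdiff, Finset.mem_Icc, Finset.mem_singleton]
      rw [or_assoc]
    have hB : ∀ x ∈ S \ Finset.Icc (g+1) m, x < g := by
      intro x hx
      rw [Finset.mem_sdiff, Finset.mem_Icc] at hx
      have h1 := hmax x hx.1
      have h2 : x ≠ g := fun h => hgS (h ▸ hx.1)
      have := hx.2
      omega
    have hrun2 : Finset.Icc (g+1) m ⊆ S := by
      intro x hx; rw [Finset.mem_Icc] at hx; exact hrun x (by omega) hx.2
    have hdecompS : (S \ Finset.Icc (g+1) m).sum id + (Finset.Icc (g+1) m).sum id = S.sum id :=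
      Finset.sum_sdiff hrun2
    have hcardS : (S \ Finset.Icc (g+1) m).card + (m - g) = S.card := by
      have h := Finset.card_sdiff_add_card_eq_card hrun2
      rw [Nat.card_Icc] at h
      omega
    have hd1 : Disjoint (S \ Finset.Icc (g+1) m) (Finset.Icc g (m-1)) := by
      rw [Finset.disjoint_left]
      intro x hx hx2
      rw [Finset.mem_Icc] at hx2
      have := hB x hx
      omega
    have hd2 : Disjoint ((S \ Finset.Icc (g+1) m) ∪ Finset.Icc g (m-1)) {m-g} := by
      rw [Finset.disjoint_singleton_right]
      simp only [Finset.mem_union, Finset.mem_sdiff, Finset.mem_Icc]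
      rintro (⟨h1, -⟩ | ⟨h1, h2⟩)
      · have := hmin _ h1; omega
      · omega
    have hshift2 : (Finset.Icc (g+1) m).sum id = (Finset.Icc g (m-1)).sum id + (m - g) := by
      have h := sum_Icc_shift g (m-1)
      have e : m - 1 + 1 = m := by omega
      rw [e] at h
      omega
    have hsumT : (Fr S).sum id = N := by
      rw [hT, Finset.sum_union hd2, Finset.sum_union hd1]
      simp only [Finset.sum_singleton, Function.id_def] at *
      omega
    have hcardT : (Fr S).card = S.card + 1 := by
      rw [hT, Finset.card_union_of_disjoint hd2, Finset.card_union_of_disjoint hd1,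
        Nat.card_Icc, Finset.card_singleton]
      omega
    have h0T : 0 ∉ Fr S := by
      rw [hmemT]
      push_neg
      refine ⟨fun h => absurd h h0, by omega, by omega⟩
    refine ⟨⟨h0T, hsumT⟩, Or.inl hcardT, ?_⟩
    have hm1T : m - 1 ∈ Fr S := (hmemT _).2 (Or.inr (Or.inl ⟨by omega, le_rfl⟩))
    have hmT : (Fr S).max.getD 0 = m - 1 := by
      apply max_getD_eq hm1T
      intro x hx
      rw [hmemT] at hx
      rcases hx with ⟨hx1, hx2⟩ | ⟨h1, h2⟩ | rfl
      · have := hmax x hx1; omega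
      · omega
      · omega
    have hsT : (Fr S).min.getD 0 = m - g := by
      apply min_getD_eq ((hmemT _).2 (Or.inr (Or.inr rfl)))
      intro x hx
      rw [hmemT] at hx
      rcases hx with ⟨hx1, -⟩ | ⟨h1, -⟩ | rfl
      · have := hmin x hx1; omega
      · omega
      · omega
    obtain ⟨gT, hgTdef⟩ : ∃ gT, ((Finset.range (m-1+1)) \ Fr S).max.getD 0 = gT := ⟨_, rfl⟩
    have hDTne : ((Finset.range (m-1+1)) \ Fr S).Nonempty := by
      refine ⟨0, ?_⟩
      simp only [Finset.mem_sdiff, Finset.mem_range]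
      exact ⟨by omega, h0T⟩
    have hgTD : gT ∈ (Finset.range (m-1+1)) \ Fr S := hgTdef ▸ max_getD_mem hDTne
    have hgTr : gT < m - 1 + 1 := Finset.mem_range.1 (Finset.mem_sdiff.1 hgTD).1
    have hgTnT : gT ∉ Fr S := (Finset.mem_sdiff.1 hgTD).2
    have hgTlt : gT < g := by
      by_contra hge
      exact hgTnT ((hmemT _).2 (Or.inr (Or.inl ⟨by omega, by omega⟩)))
    rw [Fr_def, hmT, hsT, hgTdef, if_pos (by omega)]
    have e1 : m - 1 - (m - g) + 1 = g := by omega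
    have e2 : m - 1 - (m - g) + 2 = g + 1 := by omega
    have e3 : m - 1 + 1 = m := by omega
    rw [e1, e2, e3]
    ext x
    simp only [Finset.mem_union, Finset.mem_sdiff, Finset.mem_erase, Finset.mem_Icc,
      Finset.mem_singleton, hmemT]
    constructor
    · rintro (⟨⟨hne', hx⟩, hni⟩ | ⟨h1, h2⟩)
      · rcases hx with ⟨hxS, -⟩ | ⟨hg1, hg2⟩ | heq
        · exact hxS
        · exact absurd ⟨hg1, hg2⟩ hni
        · exact absurd heq hne'
      · exact hrun x (by omega) h2
    · intro hx
      have hxm := hmax x hx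
      have hxs := hmin x hx
      by_cases h1 : g + 1 ≤ x
      · right; exact ⟨h1, hxm⟩
      · left
        have hxg : x ≠ g := fun h => hgS (h ▸ hx)
        refine ⟨⟨by omega, Or.inl ⟨hx, by omega⟩⟩, by omega⟩


lemma sum_zero {N : ℕ} (hN : N % 5 = 3 ∨ N % 5 = 4)
    (Fr : Finset ℕ → Finset ℕ)
    (Fr_spec : ∀ {S : Finset ℕ}, 0 ∉ S → S.sum id = N →
      (0 ∉ Fr S ∧ (Fr S).sum id = N) ∧
      ((Fr S).card = S.card + 1 ∨ S.card = (Fr S).card + 1) ∧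
      Fr (Fr S) = S) :
    ∑ S ∈ (Finset.range (N+1)).powerset.filter (fun S => 0 ∉ S ∧ S.sum id = N),
      (-1:ℤ)^S.card = 0 := by
  have hmem : ∀ S : Finset ℕ,
      S ∈ (Finset.range (N+1)).powerset.filter (fun S => 0 ∉ S ∧ S.sum id = N) ↔
      (0 ∉ S ∧ S.sum id = N) := by
    intro S
    rw [Finset.mem_filter, Finset.mem_powerset]
    constructor
    · exact fun h => h.2
    · intro h
      refine ⟨fun x hx => ?_, h⟩
      rw [Finset.mem_range]
      have : x ≤ S.sum id := Finset.single_le_sum (f := id) (fun i _ => Nat.zero_le _) hx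
      omega
  apply Finset.sum_involution (fun S _ => Fr S)
  · intro S hS
    obtain ⟨h0, hsum⟩ := (hmem S).1 hS
    obtain ⟨-, hcard, -⟩ := Fr_spec h0 hsum
    rcases hcard with h | h <;> rw [h] <;> ring
  · intro S hS _
    obtain ⟨h0, hsum⟩ := (hmem S).1 hS
    obtain ⟨-, hcard, -⟩ := Fr_spec h0 hsum
    intro heq
    rw [heq] at hcard
    omega
  · intro S hS
    obtain ⟨h0, hsum⟩ := (hmem S).1 hS
    obtain ⟨hP, -, -⟩ := Fr_spec h0 hsum
    exact (hmem _).2 hP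
  · intro S hS
    obtain ⟨h0, hsum⟩ := (hmem S).1 hS
    exact (Fr_spec h0 hsum).2.2

lemma coeff_prod (M NN : ℕ) :
    (PowerSeries.coeff (R := ℤ) NN) (∏ m ∈ Finset.range M, (1 - (X : PowerSeries ℤ)^(m+1))) =
    ∑ t ∈ (Finset.range M).powerset.filter (fun t => (∑ i ∈ t, (i+1)) = NN),
      (-1:ℤ)^t.card := by
  have h1 : ∀ m ∈ Finset.range M, (1 - (X : PowerSeries ℤ)^(m+1)) = (-X^(m+1)) + 1 := by
    intro m _; ring
  rw [Finset.prod_congr rfl h1, Finset.prod_add]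
  simp only [Finset.prod_const_one, mul_one]
  have h2 : ∀ t : Finset ℕ, (∏ i ∈ t, (-(X : PowerSeries ℤ)^(i+1))) =
      PowerSeries.C (R := ℤ) ((-1)^t.card) * X^(∑ i ∈ t, (i+1)) := by
    intro t
    rw [map_pow, map_neg, map_one]
    calc ∏ i ∈ t, (-(X : PowerSeries ℤ)^(i+1))
        = ∏ i ∈ t, ((-1) * (X : PowerSeries ℤ)^(i+1)) := by
          apply Finset.prod_congr rfl; intros; ring
      _ = (∏ _i ∈ t, (-1 : PowerSeries ℤ)) * ∏ i ∈ t, (X : PowerSeries ℤ)^(i+1) :=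
          Finset.prod_mul_distrib
      _ = (-1)^t.card * X^(∑ i ∈ t, (i+1)) := by
          rw [Finset.prod_const, Finset.prod_pow_eq_pow_sum]
  rw [map_sum]
  rw [Finset.sum_congr rfl (fun t _ => by rw [h2 t, PowerSeries.coeff_C_mul, PowerSeries.coeff_X_pow])]
  rw [Finset.sum_filter]
  apply Finset.sum_congr rfl
  intro t _
  by_cases h : (∑ i ∈ t, (i+1)) = NN
  · rw [if_pos h, if_pos h.symm, mul_one]
  · rw [if_neg h, if_neg (fun hh => h hh.symm), mul_zero]

lemma reindex (M NN : ℕ) (h : NN < M) :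
    ∑ t ∈ (Finset.range M).powerset.filter (fun t => (∑ i ∈ t, (i+1)) = NN), (-1:ℤ)^t.card
    = ∑ S ∈ (Finset.range (NN+1)).powerset.filter (fun S => 0 ∉ S ∧ S.sum id = NN),
        (-1:ℤ)^S.card := by
  apply Finset.sum_nbij' (fun t => t.image (· + 1)) (fun S => S.image (· - 1))
  · intro t ht
    rw [Finset.mem_filter, Finset.mem_powerset] at ht ⊢
    obtain ⟨hsub, hsum⟩ := ht
    have hsumi : (t.image (· + 1)).sum id = ∑ i ∈ t, (i+1) := by
      rw [Finset.sum_image (by intro x _ y _ hxy; simp only at hxy; omega)]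
      rfl
    have hsum' : (t.image (· + 1)).sum id = NN := by rw [hsumi, hsum]
    refine ⟨?_, ?_, hsum'⟩
    · intro x hx
      rw [Finset.mem_range]
      have : x ≤ (t.image (· + 1)).sum id := Finset.single_le_sum (f := id) (fun i _ => Nat.zero_le _) hx
      omega
    · simp only [Finset.mem_image]
      rintro ⟨a, -, ha⟩
      omega
  · intro S hS
    rw [Finset.mem_filter, Finset.mem_powerset] at hS ⊢
    obtain ⟨hsub, h0, hsum⟩ := hS
    have hpos : ∀ x ∈ S, 1 ≤ x := by
      intro x hx
      rcases Nat.eq_zero_or_pos x with rfl | hp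
      · exact absurd hx h0
      · exact hp
    have hinj : Set.InjOn (· - 1) S := by
      intro x hx y hy hxy
      have := hpos x hx; have := hpos y hy
      simp only at hxy
      omega
    constructor
    · intro x hx
      rw [Finset.mem_image] at hx
      obtain ⟨a, ha, rfl⟩ := hx
      rw [Finset.mem_range]
      have : a ≤ S.sum id := Finset.single_le_sum (f := id) (fun i _ => Nat.zero_le _) ha
      omega
    · rw [Finset.sum_image hinj]
      rw [← hsum]
      apply Finset.sum_congr rfl
      intro x hx
      have := hpos x hx
      simp only [id]
      omega
  · intro t ht
    rw [Finset.image_image]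
    have : ∀ x ∈ t, ((fun x => x - 1) ∘ (· + 1)) x = id x := by
      intro x _; simp
    rw [Finset.image_congr this, Finset.image_id]
  · intro S hS
    rw [Finset.mem_filter] at hS
    obtain ⟨-, h0, -⟩ := hS
    rw [Finset.image_image]
    have : ∀ x ∈ S, ((· + 1) ∘ (fun x => x - 1)) x = id x := by
      intro x hx
      have : x ≠ 0 := fun h => h0 (h ▸ hx)
      simp only [Function.comp_apply, id]
      omega
    rw [Finset.image_congr this, Finset.image_id]
  · intro t ht
    rw [Finset.card_image_of_injective _ (add_left_injective 1)]

end PentagonalAux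

open PentagonalAux in
/-- The coefficients of `q^{5n+3}` and `q^{5n+4}` in `∏_{m≥1} (1-q^m)` vanish.  The product is
truncated at `m = 5n+5`, which does not affect these coefficients. -/
theorem pentagonal_coeffs_vanish (n : ℕ) :
    (PowerSeries.coeff (R := ℤ) (5 * n + 3))
        (∏ m ∈ Finset.range (5 * n + 5), (1 - (PowerSeries.X : PowerSeries ℤ) ^ (m + 1))) = 0 ∧
    (PowerSeries.coeff (R := ℤ) (5 * n + 4))
        (∏ m ∈ Finset.range (5 * n + 5), (1 - (PowerSeries.X : PowerSeries ℤ) ^ (m + 1))) = 0 := by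
  constructor
  · rw [coeff_prod, reindex _ _ (by omega)]
    exact sum_zero (by omega) Fr (fun h0 hsum => Fr_spec (by omega) h0 hsum)
  · rw [coeff_prod, reindex _ _ (by omega)]
    exact sum_zero (by omega) Fr (fun h0 hsum => Fr_spec (by omega) h0 hsum)
end
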